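/- arXiv:2401.01805 — 6 statements merged into one kernel-verified Lean document; each statement's English description precedes it below -/
import Mathlib

section
/- Let E_0 : [0,∞) → [0,1] be a nonincreasing right-continuous function with E_0(0) = 1 and E_0(t) → 0 as t → ∞, so that G = 1 − E_0 is the cumulative distribution function of a positive random variable. Let (T̃_i)_{i≥1} be i.i.d. random variables with distribution function G, let ν be independent of (T̃_i) with geometric distribution P(ν = k) = 2^{-k} for k = 1, 2, ..., and let T_a = Σ_{i=1}^{ν} T̃_i. Then for every s > 0, E[e^{-s T_a}] = (1 − s · L E_0(s)) / (1 + s · L E_0(s)), where L E_0(s) = ∫_0^∞ e^{-st} E_0(t) dt; that is, the geometric compound T_a solves the Slepian-based independent interval approximation equation determined by the expectation function E_0. -/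
open MeasureTheory ProbabilityTheory Real Set Filter

set_option maxHeartbeats 1000000

lemma key_int_aux {s : ℝ} (hs : 0 < s) (c : ℝ) :
    ∫ t in Set.Ioi c, s * Real.exp (-s * t) = Real.exp (-s * c) := by
  have hderiv : ∀ x ∈ Set.Ici c, HasDerivAt (fun t => -Real.exp (-s * t)) (s * Real.exp (-s * x)) x := by
    intro x _
    have h1 : HasDerivAt (fun t : ℝ => -s * t) (-s) x := by
      simpa using (hasDerivAt_id x).const_mul (-s)
    have h2 : HasDerivAt (fun t => -Real.exp (-s * t)) (-(Real.exp (-s * x) * -s)) x := (h1.exp).neg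
    convert h2 using 1; ring
  have hint : IntegrableOn (fun t => s * Real.exp (-s * t)) (Set.Ioi c) :=
    (exp_neg_integrableOn_Ioi c hs).const_mul s
  have htend : Filter.Tendsto (fun t => -Real.exp (-s * t)) Filter.atTop (nhds 0) := by
    have h1 : Filter.Tendsto (fun t : ℝ => -s * t) Filter.atTop Filter.atBot := by
      have := tendsto_neg_atTop_atBot.comp (Filter.tendsto_id.const_mul_atTop hs)
      simpa [Function.comp_def, neg_mul] using this
    have := (Real.tendsto_exp_atBot.comp h1).neg
    simpa using this
  have := integral_Ioi_of_hasDerivAt_of_tendsto' hderiv hint htend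
  rw [this]; ring

lemma stepA_aux {Ω : Type*} [MeasureSpace Ω] [IsProbabilityMeasure (ℙ : Measure Ω)]
    {s : ℝ} (hs : 0 < s) (E₀ : ℝ → ℝ) (X : Ω → ℝ)
    (hrange : ∀ t, 0 ≤ t → E₀ t ∈ Set.Icc (0 : ℝ) 1)
    (hanti : AntitoneOn E₀ (Set.Ici 0))
    (hXmeas : Measurable X) (hXpos : ∀ ω : Ω, 0 < X ω)
    (hcdf : ∀ x : ℝ, 0 ≤ x → ((ℙ : Measure Ω) {ω | X ω ≤ x}).toReal = 1 - E₀ x) :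
    ∫ ω, Real.exp (-s * X ω) ∂(ℙ : Measure Ω)
      = 1 - s * ∫ t in Set.Ioi (0:ℝ), Real.exp (-s * t) * E₀ t := by
  set f : Ω × ℝ → ℝ := fun p => if X p.1 ≤ p.2 then s * Real.exp (-s * p.2) else 0 with hf_def
  have hmeas_f : Measurable f := by
    refine Measurable.ite ?_ ((measurable_snd.const_mul (-s)).exp.const_mul s) measurable_const
    exact measurableSet_le (hXmeas.comp measurable_fst) measurable_snd
  have hf_eq : ∀ ω, (fun t => f (ω, t)) = Set.indicator (Set.Ici (X ω)) (fun t => s * Real.exp (-s * t)) := by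
    intro ω; funext t
    simp only [hf_def, Set.indicator_apply, Set.mem_Ici]
  have hinner : ∀ ω, ∫ t in Set.Ioi (0:ℝ), f (ω, t) = Real.exp (-s * X ω) := by
    intro ω
    have hc : 0 < X ω := hXpos ω
    rw [show (fun t => f (ω, t)) = _ from hf_eq ω]
    have hss : Set.Ici (X ω) ∩ Set.Ioi 0 = Set.Ici (X ω) := by
      refine Set.inter_eq_left.mpr ?_
      intro t ht
      exact lt_of_lt_of_le hc ht
    rw [integral_indicator measurableSet_Ici, Measure.restrict_restrict measurableSet_Ici,
      hss, integral_Ici_eq_integral_Ioi, key_int_aux hs]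
  have hf_nonneg : ∀ p, 0 ≤ f p := by
    intro p; simp only [hf_def]
    split_ifs
    · positivity
    · exact le_rfl
  have hf_int : Integrable f ((ℙ : Measure Ω).prod (volume.restrict (Set.Ioi (0:ℝ)))) := by
    rw [integrable_prod_iff hmeas_f.aestronglyMeasurable]
    constructor
    · refine Filter.Eventually.of_forall fun ω => ?_
      rw [hf_eq ω]
      exact ((exp_neg_integrableOn_Ioi 0 hs).const_mul s).indicator measurableSet_Ici
    · have : (fun ω => ∫ t in Set.Ioi (0:ℝ), ‖f (ω, t)‖) = fun ω => Real.exp (-s * X ω) := by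
        funext ω
        rw [← hinner ω]
        refine integral_congr_ae (Filter.Eventually.of_forall fun t => ?_)
        show ‖f (ω, t)‖ = f (ω, t)
        rw [Real.norm_eq_abs, abs_of_nonneg (hf_nonneg _)]
      rw [this]
      refine (integrable_const (1:ℝ)).mono' ((hXmeas.const_mul (-s)).exp.aestronglyMeasurable) ?_
      refine Filter.Eventually.of_forall fun ω => ?_
      rw [Real.norm_eq_abs, abs_of_pos (Real.exp_pos _), Real.exp_le_one_iff]
      nlinarith [hXpos ω]
  have hswap : ∫ ω, (∫ t in Set.Ioi (0:ℝ), f (ω, t)) ∂(ℙ : Measure Ω)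
      = ∫ t in Set.Ioi (0:ℝ), ∫ ω, f (ω, t) ∂(ℙ : Measure Ω) := by
    exact integral_integral_swap (f := fun ω t => f (ω, t)) hf_int
  have houter : ∀ t ∈ Set.Ioi (0:ℝ), ∫ ω, f (ω, t) ∂(ℙ : Measure Ω) = s * Real.exp (-s * t) * (1 - E₀ t) := by
    intro t ht
    have h1 : (fun ω => f (ω, t)) = Set.indicator {ω | X ω ≤ t} (fun _ => s * Real.exp (-s * t)) := by
      funext ω
      simp only [hf_def, Set.indicator_apply, Set.mem_setOf_eq]
    rw [h1, integral_indicator_const _ (measurableSet_le hXmeas measurable_const),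
      measureReal_def, hcdf t (le_of_lt ht), smul_eq_mul]
    ring
  have hAnti : Antitone (fun t : ℝ => if t ≤ 0 then (1:ℝ) else E₀ t) := by
    intro a b hab
    by_cases hb : b ≤ 0
    · simp [hab.trans hb, hb]
    · push_neg at hb
      by_cases ha : a ≤ 0
      · simp only [ha, if_true, hb.not_ge, if_false]
        exact (hrange b hb.le).2
      · push_neg at ha
        simp only [ha.not_ge, if_false, hb.not_ge]
        exact hanti ha.le hb.le hab
  have hE_int : IntegrableOn (fun t => Real.exp (-s * t) * E₀ t) (Set.Ioi (0:ℝ)) := by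
    have hg_int : IntegrableOn (fun t => Real.exp (-s * t) * (if t ≤ 0 then (1:ℝ) else E₀ t)) (Set.Ioi (0:ℝ)) := by
      refine (exp_neg_integrableOn_Ioi 0 hs).mono' ?_ ?_
      · exact ((measurable_id.const_mul (-s)).exp.mul hAnti.measurable).aestronglyMeasurable
      · refine ae_restrict_of_ae (Filter.Eventually.of_forall fun t => ?_)
        rw [Real.norm_eq_abs, abs_mul, abs_of_pos (Real.exp_pos _)]
        have hb : |if t ≤ 0 then (1:ℝ) else E₀ t| ≤ 1 := by
          rw [abs_le]
          split_ifs with h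
          · norm_num
          · push_neg at h
            exact ⟨by linarith [(hrange t h.le).1], (hrange t h.le).2⟩
        nlinarith [Real.exp_pos (-s * t), abs_nonneg (if t ≤ 0 then (1:ℝ) else E₀ t)]
    refine hg_int.congr_fun (fun t ht => ?_) measurableSet_Ioi
    have : ¬ t ≤ 0 := not_le.mpr ht
    simp [this]
  calc ∫ ω, Real.exp (-s * X ω) ∂(ℙ : Measure Ω)
      = ∫ ω, (∫ t in Set.Ioi (0:ℝ), f (ω, t)) ∂(ℙ : Measure Ω) :=
        (integral_congr_ae (Filter.Eventually.of_forall fun ω => (hinner ω).symm))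
    _ = ∫ t in Set.Ioi (0:ℝ), ∫ ω, f (ω, t) ∂(ℙ : Measure Ω) := hswap
    _ = ∫ t in Set.Ioi (0:ℝ), (s * Real.exp (-s * t) - s * (Real.exp (-s * t) * E₀ t)) := by
        refine setIntegral_congr_fun measurableSet_Ioi (fun t ht => ?_)
        rw [houter t ht]; ring
    _ = (∫ t in Set.Ioi (0:ℝ), s * Real.exp (-s * t)) - ∫ t in Set.Ioi (0:ℝ), s * (Real.exp (-s * t) * E₀ t) := by
        exact integral_sub ((exp_neg_integrableOn_Ioi 0 hs).const_mul s) (hE_int.const_mul s)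
    _ = 1 - s * ∫ t in Set.Ioi (0:ℝ), Real.exp (-s * t) * E₀ t := by
        rw [key_int_aux hs 0, integral_const_mul]
        norm_num

/-- If `E₀ : [0,∞) → [0,1]` is nonincreasing, right-continuous, `E₀(0) = 1`,
`E₀(t) → 0`, and `T̃_i` are i.i.d. with cdf `G = 1 − E₀`, `ν` independent geometric with
`P(ν = k) = 2^{-k}`, then the geometric compound `T_a = Σ_{i=1}^{ν} T̃_i` satisfies
`𝔼[e^{-s T_a}] = (1 − s·L E₀(s))/(1 + s·L E₀(s))` for all `s > 0`. -/
theorem stmt_2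
    {Ω : Type*} [MeasureSpace Ω] [IsProbabilityMeasure (ℙ : Measure Ω)]
    (E₀ LE₀ : ℝ → ℝ) (T : ℕ → Ω → ℝ) (ν : Ω → ℕ) (Ta : Ω → ℝ)
    (hrange : ∀ t, 0 ≤ t → E₀ t ∈ Set.Icc (0 : ℝ) 1)
    (hanti : AntitoneOn E₀ (Set.Ici 0))
    (hrc : ∀ x, 0 ≤ x → ContinuousWithinAt E₀ (Set.Ici x) x)
    (h0 : E₀ 0 = 1)
    (hlim : Filter.Tendsto E₀ Filter.atTop (nhds 0))
    (hmeas : ∀ i, Measurable (T i)) (hνmeas : Measurable ν)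
    (hindep : iIndepFun T ℙ)
    (hident : ∀ i j, IdentDistrib (T i) (T j) ℙ ℙ)
    (hpos : ∀ i ω, 0 < T i ω)
    (hcdf : ∀ i (x : ℝ), 0 ≤ x → (ℙ {ω | T i ω ≤ x}).toReal = 1 - E₀ x)
    (hνT : IndepFun ν (fun ω i => T i ω) ℙ)
    (hν : ∀ k : ℕ, 1 ≤ k → (ℙ {ω | ν ω = k}).toReal = (1 / 2 : ℝ) ^ k)
    (hTa : ∀ ω, Ta ω = ∑ i ∈ Finset.range (ν ω), T (i + 1) ω)
    (hL : ∀ s, LE₀ s = ∫ t in Set.Ioi (0:ℝ), Real.exp (-s * t) * E₀ t) :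
    ∀ s > 0, ∫ ω, Real.exp (-s * Ta ω) ∂ℙ
      = (1 - s * LE₀ s) / (1 + s * LE₀ s) := by
  intro s hs
  set ψ : ℝ := ∫ ω, Real.exp (-s * T 1 ω) ∂ℙ with hψ_def
  have hψ : ψ = 1 - s * LE₀ s := by
    rw [hψ_def, stepA_aux hs E₀ (T 1) hrange hanti (hmeas 1) (hpos 1) (fun x hx => hcdf 1 x hx),
      hL s]
  have hψ_nonneg : 0 ≤ ψ := integral_nonneg fun ω => (Real.exp_pos _).le
  have hexp_le : ∀ i (ω : Ω), Real.exp (-s * T i ω) ≤ 1 := by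
    intro i ω
    rw [Real.exp_le_one_iff]
    nlinarith [hpos i ω]
  have hint : ∀ i, Integrable (fun ω => Real.exp (-s * T i ω)) ℙ := fun i =>
    (integrable_const (1:ℝ)).mono' ((hmeas i).const_mul (-s)).exp.aestronglyMeasurable
      (Filter.Eventually.of_forall fun ω => by
        rw [Real.norm_eq_abs, abs_of_pos (Real.exp_pos _)]; exact hexp_le i ω)
  have hψ_le_one : ψ ≤ 1 := by
    calc ψ ≤ ∫ _, (1:ℝ) ∂ℙ := integral_mono (hint 1) (integrable_const 1) (fun ω => hexp_le 1 ω)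
    _ = 1 := by simp
  -- measurability of Ta
  have hTa_meas : Measurable Ta := by
    have hEq : Ta = (fun p : (ℕ → ℝ) × ℕ => ∑ i ∈ Finset.range p.2, p.1 (i + 1)) ∘
        (fun ω => (fun i => T i ω, ν ω)) := by
      funext ω; exact hTa ω
    rw [hEq]
    refine Measurable.comp ?_ ((measurable_pi_lambda _ fun i => hmeas i).prodMk hνmeas)
    exact measurable_from_prod_countable_left fun n =>
      show Measurable fun v : ℕ → ℝ => ∑ i ∈ Finset.range n, v (i + 1) from
        Finset.measurable_sum _ fun i _ => measurable_pi_apply (i + 1)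
  have hTa_nonneg : ∀ ω, 0 ≤ Ta ω := fun ω => by
    rw [hTa ω]; exact Finset.sum_nonneg fun i _ => (hpos (i+1) ω).le
  have hintTa : Integrable (fun ω => Real.exp (-s * Ta ω)) ℙ :=
    (integrable_const (1:ℝ)).mono' ((hTa_meas.const_mul (-s)).exp.aestronglyMeasurable)
      (Filter.Eventually.of_forall fun ω => by
        rw [Real.norm_eq_abs, abs_of_pos (Real.exp_pos _), Real.exp_le_one_iff]
        nlinarith [hTa_nonneg ω])
  -- partition by values of ν
  set A : ℕ → Set Ω := fun k => ν ⁻¹' {k} with hA_def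
  have hA_meas : ∀ k, MeasurableSet (A k) := fun k => hνmeas (measurableSet_singleton k)
  have hA_disj : Pairwise (Function.onFun Disjoint A) := by
    intro i j hij
    refine Set.disjoint_left.mpr fun ω hi hj => hij ?_
    have h1 : ν ω = i := hi
    have h2 : ν ω = j := hj
    rw [← h1, h2]
  have hA_union : (⋃ k, A k) = Set.univ := by
    ext ω; simp [hA_def]
  have hAset : ∀ k, A k = {ω | ν ω = k} := fun _ => rfl
  have hPk : ∀ k, 1 ≤ k → ℙ (A k) = ENNReal.ofReal ((1/2 : ℝ)^k) := by
    intro k hk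
    rw [← ENNReal.ofReal_toReal (measure_ne_top ℙ (A k)), hAset, hν k hk]
  have hP0 : ℙ (A 0) = 0 := by
    have hsum1 : (∑' k, ℙ (A k)) = 1 := by
      rw [← measure_iUnion hA_disj hA_meas, hA_union, measure_univ]
    have htail : (∑' k : ℕ, ℙ (A (k+1))) = 1 := by
      have h1 : ∀ k : ℕ, ℙ (A (k+1)) = (2:ENNReal)⁻¹ ^ (k+1) := by
        intro k
        rw [hPk (k+1) (by omega), ENNReal.ofReal_pow (by norm_num)]
        congr 1
        rw [show (1/2 : ℝ) = (2:ℝ)⁻¹ by norm_num, ENNReal.ofReal_inv_of_pos (by norm_num)]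
        norm_num
      calc (∑' k:ℕ, ℙ (A (k+1))) = ∑' k:ℕ, (2:ENNReal)⁻¹ ^ (k+1) := tsum_congr h1
      _ = (2:ENNReal)⁻¹ * (1 - (2:ENNReal)⁻¹)⁻¹ := ENNReal.tsum_geometric_add_one _
      _ = 1 := by
            rw [ENNReal.one_sub_inv_two, inv_inv]
            exact ENNReal.inv_mul_cancel (by norm_num) (by norm_num)
    have hzero_add : (∑' k, ℙ (A k)) = ℙ (A 0) + ∑' k : ℕ, ℙ (A (k + 1)) :=
      tsum_eq_zero_add' ENNReal.summable
    rw [hsum1, htail] at hzero_add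
    refine (ENNReal.add_left_inj (by norm_num : (1:ENNReal) ≠ ⊤)).mp ?_
    rw [zero_add]
    exact hzero_add.symm
  -- mgf of each T i at -s is ψ
  have hmgf_one : ∀ i, mgf (T i) ℙ (-s) = ψ := by
    intro i
    have h := ((hident i 1).comp ((measurable_id.const_mul (-s)).exp)).integral_eq
    rw [hψ_def, mgf]
    simpa [Function.comp_def] using h
  -- value of the integral on each piece
  have hterm : ∀ k, ∫ ω in A k, Real.exp (-s * Ta ω) ∂ℙ = (ℙ (A k)).toReal * ψ ^ k := by
    intro k
    have hcongr : Set.EqOn (fun ω => Real.exp (-s * Ta ω))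
        (fun ω => Real.exp (-s * ∑ i ∈ Finset.range k, T (i+1) ω)) (A k) := by
      intro ω hω
      have hk : ν ω = k := hω
      simp only [hTa ω, hk]
    rw [setIntegral_congr_fun (hA_meas k) hcongr]
    set Xf : Ω → ℝ := (fun n : ℕ => if n = k then (1:ℝ) else 0) ∘ ν with hXf_def
    set Yf : Ω → ℝ := (fun v : ℕ → ℝ => Real.exp (-s * ∑ i ∈ Finset.range k, v (i+1))) ∘
        (fun ω i => T i ω) with hYf_def
    have hind : ∫ ω in A k, Real.exp (-s * ∑ i ∈ Finset.range k, T (i+1) ω) ∂ℙ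
        = ∫ ω, Xf ω * Yf ω ∂ℙ := by
      rw [← integral_indicator (hA_meas k)]
      refine integral_congr_ae (Filter.Eventually.of_forall fun ω => ?_)
      by_cases hω : ω ∈ A k
      · have hk : ν ω = k := hω
        simp [Set.indicator_of_mem hω, hXf_def, hYf_def, Function.comp_def, hk]
      · have hk : ¬ (ν ω = k) := hω
        simp [Set.indicator_of_notMem hω, hXf_def, hYf_def, Function.comp_def, hk]
    have hX1 : Measurable (fun n : ℕ => if n = k then (1:ℝ) else 0) :=
      measurable_of_countable _
    have hX2 : Measurable (fun v : ℕ → ℝ => Real.exp (-s * ∑ i ∈ Finset.range k, v (i+1))) := by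
      exact ((Finset.measurable_sum _ fun i _ => measurable_pi_apply (i + 1)).const_mul (-s)).exp
    have hIndep2 : IndepFun Xf Yf ℙ := hνT.comp hX1 hX2
    have hXmeas' : Measurable Xf := hX1.comp hνmeas
    have hYmeas' : Measurable Yf :=
      hX2.comp (measurable_pi_lambda _ fun i => hmeas i)
    have hmul : ∫ ω, Xf ω * Yf ω ∂ℙ = (∫ ω, Xf ω ∂ℙ) * ∫ ω, Yf ω ∂ℙ :=
      hIndep2.integral_mul_eq_mul_integral hXmeas'.aestronglyMeasurable hYmeas'.aestronglyMeasurable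
    have hXint : ∫ ω, Xf ω ∂ℙ = (ℙ (A k)).toReal := by
      have hXind : Xf = Set.indicator (A k) (fun _ => (1:ℝ)) := by
        funext ω
        by_cases hω : ω ∈ A k
        · have hk : ν ω = k := hω
          simp [Set.indicator_of_mem hω, hXf_def, Function.comp_def, hk]
        · have hk : ¬ (ν ω = k) := hω
          simp [Set.indicator_of_notMem hω, hXf_def, Function.comp_def, hk]
      rw [hXind, integral_indicator_const _ (hA_meas k), smul_eq_mul, mul_one, measureReal_def]
    have hinj : Function.Injective (fun i : ℕ => i + 1) := add_left_injective 1
    have hYint : ∫ ω, Yf ω ∂ℙ = ψ ^ k := by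
      have hsum_eq : ∀ ω : Ω, (∑ i ∈ Finset.range k, T (i+1) ω)
          = (∑ j ∈ (Finset.range k).image (fun i => i + 1), T j) ω := by
        intro ω
        rw [Finset.sum_apply, Finset.sum_image (fun a _ b _ h => hinj h)]
      calc ∫ ω, Yf ω ∂ℙ
          = mgf (∑ j ∈ (Finset.range k).image (fun i => i+1), T j) ℙ (-s) := by
            rw [mgf]
            refine integral_congr_ae (Filter.Eventually.of_forall fun ω => ?_)
            simp only [hYf_def, Function.comp_def]
            rw [hsum_eq ω]
        _ = ∏ j ∈ (Finset.range k).image (fun i => i+1), mgf (T j) ℙ (-s) :=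
            hindep.mgf_sum hmeas _
        _ = ψ ^ k := by
            rw [Finset.prod_congr rfl fun j _ => hmgf_one j, Finset.prod_const,
              Finset.card_image_of_injective _ hinj, Finset.card_range]
    rw [hind, hmul, hXint, hYint]
  -- decomposition of the integral
  have hdecomp : ∫ ω, Real.exp (-s * Ta ω) ∂ℙ = ∑' k, ∫ ω in A k, Real.exp (-s * Ta ω) ∂ℙ := by
    rw [← setIntegral_univ (μ := ℙ) (f := fun ω => Real.exp (-s * Ta ω)), ← hA_union,
      integral_iUnion hA_meas hA_disj (by rw [hA_union]; exact integrableOn_univ.mpr hintTa)]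
  -- geometric series
  have hhalf : 0 ≤ ψ/2 := by linarith
  have hlt : ψ/2 < 1 := by linarith
  have hgeo_sum : Summable (fun k : ℕ => (ψ/2)^k) := summable_geometric_of_lt_one hhalf hlt
  have hterm' : ∀ k, (ℙ (A k)).toReal * ψ ^ k = (ψ/2)^k - (if k = 0 then (1:ℝ) else 0) := by
    intro k
    cases k with
    | zero => simp [hP0]
    | succ n =>
      rw [hAset, hν (n+1) (by omega)]
      simp only [Nat.succ_ne_zero, if_false, sub_zero]
      rw [← mul_pow, show (1/2:ℝ) * ψ = ψ/2 by ring]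
  have hsummable_ite : Summable (fun k : ℕ => (if k = 0 then (1:ℝ) else 0)) :=
    summable_of_ne_finset_zero (s := {0}) (fun k hk => by
      simp only [Finset.mem_singleton] at hk
      simp [hk])
  have hne1 : (1:ℝ) - ψ/2 ≠ 0 := by linarith
  have h2ψ : (2:ℝ) - ψ ≠ 0 := by linarith
  rw [hdecomp, tsum_congr (fun k => (hterm k).trans (hterm' k)),
    Summable.tsum_sub hgeo_sum hsummable_ite, tsum_geometric_of_lt_one hhalf hlt, tsum_ite_eq]
  rw [show (1:ℝ) - s * LE₀ s = ψ from hψ.symm, show (1:ℝ) + s * LE₀ s = 2 - ψ by rw [hψ]; ring]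
  field_simp
  ring
end

section
/- Let R be a standard Rayleigh random variable, i.e. with density f_R(x) = x e^{-x²/2} on (0,∞), let σ > 0, and let Z be a centered Gaussian random variable with variance σ², independent of R. Then for every real number a, P(−a R + Z > 0) = (1/2) (1 − a / √(a² + σ²)). -/
open MeasureTheory ProbabilityTheory

open Set Real Filter NNReal


lemma ray_deriv (x : ℝ) : HasDerivAt (fun y : ℝ => -Real.exp (-y ^ 2 / 2))
    (x * Real.exp (-x ^ 2 / 2)) x := by
  have h1 : HasDerivAt (fun y : ℝ => -y ^ 2 / 2) (-x) x := by
    have := ((hasDerivAt_pow 2 x).neg.div_const 2)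
    exact this.congr_deriv (by ring)
  have h2 := (h1.exp).neg
  exact h2.congr_deriv (by ring)

lemma ray_tendsto : Tendsto (fun x : ℝ => -Real.exp (-x ^ 2 / 2)) atTop (nhds 0) := by
  have h1 : Tendsto (fun x : ℝ => -x ^ 2 / 2) atTop atBot := by
    apply Filter.Tendsto.atBot_div_const (by norm_num)
    exact tendsto_neg_atBot_iff.mpr (tendsto_pow_atTop (two_ne_zero))
  simpa using (Real.tendsto_exp_atBot.comp h1).neg

lemma ray_int {c : ℝ} (hc : 0 ≤ c) :
    IntegrableOn (fun x : ℝ => x * Real.exp (-x ^ 2 / 2)) (Ioi c) := by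
  refine integrableOn_Ioi_deriv_of_nonneg ?_ (fun x _ => ray_deriv x) ?_ ray_tendsto
  · exact (continuous_neg.comp (Real.continuous_exp.comp (by continuity))).continuousWithinAt
  · intro x hx
    exact mul_nonneg (le_of_lt (hc.trans_lt hx)) (Real.exp_pos _).le

lemma ray_Ioi {c : ℝ} (hc : 0 ≤ c) :
    ∫ x in Ioi c, x * Real.exp (-x ^ 2 / 2) = Real.exp (-c ^ 2 / 2) := by
  have := integral_Ioi_of_hasDerivAt_of_tendsto
    (f := fun y : ℝ => -Real.exp (-y ^ 2 / 2)) (f' := fun x => x * Real.exp (-x ^ 2 / 2))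
    ((continuous_neg.comp (Real.continuous_exp.comp (by continuity))).continuousWithinAt)
    (fun x _ => ray_deriv x) (ray_int hc) ray_tendsto
  simpa using this

lemma ray_Ioc {c : ℝ} (hc : 0 ≤ c) :
    ∫ x in Ioc 0 c, x * Real.exp (-x ^ 2 / 2) = 1 - Real.exp (-c ^ 2 / 2) := by
  have h := intervalIntegral.integral_eq_sub_of_hasDerivAt
    (f := fun y : ℝ => -Real.exp (-y ^ 2 / 2)) (f' := fun x => x * Real.exp (-x ^ 2 / 2))
    (a := 0) (b := c) (fun x _ => ray_deriv x)
    (((continuous_id.mul (Real.continuous_exp.comp (by continuity))).intervalIntegrable 0 c))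
  rw [intervalIntegral.integral_of_le hc] at h
  rw [h]
  simp
  ring

lemma muR_set {s : Set ℝ} (hs : MeasurableSet s) :
    (volume.withDensity
      (fun x => ENNReal.ofReal (if 0 < x then x * Real.exp (-x ^ 2 / 2) else 0))) s
      = ∫⁻ x in s ∩ Ioi 0, ENNReal.ofReal (x * Real.exp (-x ^ 2 / 2)) := by
  rw [withDensity_apply _ hs]
  have : ∀ x : ℝ, ENNReal.ofReal (if 0 < x then x * Real.exp (-x ^ 2 / 2) else 0)
      = (Ioi (0:ℝ)).indicator (fun x => ENNReal.ofReal (x * Real.exp (-x ^ 2 / 2))) x := by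
    intro x
    by_cases hx : 0 < x <;> simp [Set.indicator_apply, hx]
  simp_rw [this]
  rw [lintegral_indicator measurableSet_Ioi _, Measure.restrict_restrict measurableSet_Ioi,
    Set.inter_comm]

lemma muR_Ioi (t : ℝ) :
    (volume.withDensity
      (fun x => ENNReal.ofReal (if 0 < x then x * Real.exp (-x ^ 2 / 2) else 0))) (Ioi t)
      = ENNReal.ofReal (Real.exp (-(max t 0) ^ 2 / 2)) := by
  rw [muR_set measurableSet_Ioi, Set.Ioi_inter_Ioi]
  rw [← MeasureTheory.ofReal_integral_eq_lintegral_ofReal (ray_int (le_max_right t 0))]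
  · rw [ray_Ioi (le_max_right t 0)]
  · filter_upwards [ae_restrict_mem measurableSet_Ioi] with x hx
    exact mul_nonneg ((le_max_right t 0).trans hx.le) (Real.exp_pos _).le

lemma muR_Iio (t : ℝ) :
    (volume.withDensity
      (fun x => ENNReal.ofReal (if 0 < x then x * Real.exp (-x ^ 2 / 2) else 0))) (Iio t)
      = ENNReal.ofReal (1 - Real.exp (-(max t 0) ^ 2 / 2)) := by
  rw [muR_set measurableSet_Iio]
  have h1 : Iio t ∩ Ioi 0 = Ioo 0 t := by ext x; simp [and_comm]
  rw [h1]
  rcases le_or_gt t 0 with ht | ht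
  · rw [Set.Ioo_eq_empty (by linarith)]
    rw [max_eq_right ht]
    simp
  · rw [max_eq_left ht.le]
    rw [Measure.restrict_congr_set Ioo_ae_eq_Ioc]
    rw [← MeasureTheory.ofReal_integral_eq_lintegral_ofReal
      ((ray_int le_rfl).mono_set Set.Ioc_subset_Ioi_self)]
    · rw [ray_Ioc ht.le]
    · filter_upwards [ae_restrict_mem measurableSet_Ioc] with x hx
      exact mul_nonneg hx.1.le (Real.exp_pos _).le

lemma gaussInt (v : ℝ≥0) (hv : 0 < (v:ℝ)) (k : ℝ) (hk : 0 ≤ k) :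
    ∫ z in Ioi (0:ℝ), gaussianPDFReal 0 v z * Real.exp (-z ^ 2 * k)
      = (1 / 2) / Real.sqrt (1 + 2 * v * k) := by
  have hb : (0:ℝ) < 1 / (2 * v) + k := by positivity
  have h2v : (0:ℝ) < 2 * π * v := by positivity
  have hsq : Real.sqrt (2 * π * v) ≠ 0 := by positivity
  have heq : ∀ z : ℝ, gaussianPDFReal 0 v z * Real.exp (-z ^ 2 * k)
      = (Real.sqrt (2 * π * v))⁻¹ * Real.exp (-(1 / (2 * v) + k) * z ^ 2) := by
    intro z
    rw [gaussianPDFReal, mul_assoc, ← Real.exp_add]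
    congr 1
    field_simp
    ring
  simp_rw [heq]
  rw [MeasureTheory.integral_const_mul, integral_gaussian_Ioi]
  have hπb : π / (1 / (2 * v) + k) = (2 * π * v) / (1 + 2 * v * k) := by
    field_simp
  rw [hπb, Real.sqrt_div h2v.le]
  field_simp

lemma pdf_mul_int (v : ℝ≥0) (h : ℝ → ℝ) (hm : Measurable h) (hb : ∀ z, |h z| ≤ 1) :
    Integrable (fun z => gaussianPDFReal 0 v z * h z) := by
  have := (integrable_gaussianPDFReal 0 v).bdd_mul hm.aestronglyMeasurable
    (ae_of_all _ (fun z => by simpa using hb z))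
  simpa [mul_comm] using this

lemma gauss_lint (v : ℝ≥0) (hv0 : v ≠ 0) (h : ℝ → ℝ) (hm : Measurable h)
    (h0 : ∀ z, 0 ≤ h z) (h1 : ∀ z, h z ≤ 1) :
    ∫⁻ z, ENNReal.ofReal (h z) ∂(gaussianReal 0 v)
      = ENNReal.ofReal (∫ z, gaussianPDFReal 0 v z * h z) := by
  rw [gaussianReal_of_var_ne_zero 0 hv0,
    lintegral_withDensity_eq_lintegral_mul _ (measurable_gaussianPDF 0 v) hm.ennreal_ofReal]
  have heq : ∀ z, (gaussianPDF 0 v * fun z => ENNReal.ofReal (h z)) z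
      = ENNReal.ofReal (gaussianPDFReal 0 v z * h z) := fun z => by
    simp [gaussianPDF, ← ENNReal.ofReal_mul (gaussianPDFReal_nonneg 0 v z)]
  simp_rw [heq]
  rw [MeasureTheory.ofReal_integral_eq_lintegral_ofReal
    (pdf_mul_int v h hm (fun z => abs_le.mpr ⟨by linarith [h0 z], h1 z⟩))
    (ae_of_all _ (fun z => mul_nonneg (gaussianPDFReal_nonneg 0 v z) (h0 z)))]

/-- If `R` is standard Rayleigh (density `x e^{-x²/2}` on `(0,∞)`) and `Z` is an
independent centered Gaussian with variance `σ² > 0`, then for every real `a`,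
`P(−aR + Z > 0) = (1/2)(1 − a/√(a² + σ²))`. -/
theorem stmt_6
    {Ω : Type*} [MeasureSpace Ω] [IsProbabilityMeasure (ℙ : Measure Ω)]
    (R Z : Ω → ℝ) (σ : ℝ) (hσ : 0 < σ)
    (hR : Measurable R) (hZ : Measurable Z)
    (hRlaw : Measure.map R ℙ = volume.withDensity
      (fun x => ENNReal.ofReal (if 0 < x then x * Real.exp (-x ^ 2 / 2) else 0)))
    (hZlaw : Measure.map Z ℙ = gaussianReal 0 (Real.toNNReal (σ ^ 2)))
    (hindep : IndepFun R Z ℙ) :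
    ∀ a : ℝ, (ℙ {ω | 0 < -a * R ω + Z ω}).toReal
      = (1 / 2) * (1 - a / Real.sqrt (a ^ 2 + σ ^ 2)) := by
  intro a
  set v : ℝ≥0 := Real.toNNReal (σ ^ 2) with hv_def
  have hvcoe : (v : ℝ) = σ ^ 2 := Real.coe_toNNReal _ (sq_nonneg σ)
  have hvpos : 0 < (v : ℝ) := by rw [hvcoe]; positivity
  have hv0 : v ≠ 0 := by
    intro h; rw [h] at hvpos; simp at hvpos
  set μR := volume.withDensity
    (fun x => ENNReal.ofReal (if 0 < x then x * Real.exp (-x ^ 2 / 2) else 0)) with hμR_def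
  haveI hprobR : IsProbabilityMeasure μR := hRlaw ▸ Measure.isProbabilityMeasure_map hR.aemeasurable
  have hS : MeasurableSet {p : ℝ × ℝ | a * p.1 < p.2} :=
    measurableSet_lt (measurable_fst.const_mul a) measurable_snd
  have hset : {ω | 0 < -a * R ω + Z ω}
      = (fun ω => (R ω, Z ω)) ⁻¹' {p : ℝ × ℝ | a * p.1 < p.2} := by
    ext ω
    simp only [Set.mem_setOf_eq, Set.mem_preimage]
    constructor <;> intro <;> linarith
  have hmap : Measure.map (fun ω => (R ω, Z ω)) ℙ = μR.prod (gaussianReal 0 v) := by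
    rw [← hRlaw, ← hZlaw]
    exact (indepFun_iff_map_prod_eq_prod_map_map hR.aemeasurable hZ.aemeasurable).mp hindep
  have hP : ℙ {ω | 0 < -a * R ω + Z ω}
      = (μR.prod (gaussianReal 0 v)) {p : ℝ × ℝ | a * p.1 < p.2} := by
    rw [hset, ← Measure.map_apply (hR.prodMk hZ) hS, hmap]
  -- helpers
  have hsqrt_pos : 0 < Real.sqrt (a ^ 2 + σ ^ 2) := Real.sqrt_pos.mpr (by positivity)
  have hdivle : a / Real.sqrt (a ^ 2 + σ ^ 2) ≤ 1 := by
    rw [div_le_one hsqrt_pos]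
    have : a ≤ |a| := le_abs_self a
    calc a ≤ |a| := le_abs_self a
      _ = Real.sqrt (a ^ 2) := (Real.sqrt_sq_eq_abs a).symm
      _ ≤ Real.sqrt (a ^ 2 + σ ^ 2) := Real.sqrt_le_sqrt (by nlinarith)
  have G1 : ∫ z in Ioi (0:ℝ), gaussianPDFReal 0 v z = 1 / 2 := by
    have := gaussInt v hvpos 0 le_rfl
    simpa using this
  rcases lt_trichotomy a 0 with ha | ha | ha
  · -- a < 0
    have hk : (0:ℝ) ≤ 1 / (2 * a ^ 2) := by positivity
    have hG2 : ∫ z in Ioi (0:ℝ), gaussianPDFReal 0 v z * Real.exp (-z ^ 2 * (1 / (2 * a ^ 2)))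
        = (1 / 2) * (|a| / Real.sqrt (a ^ 2 + σ ^ 2)) := by
      rw [gaussInt v hvpos _ hk]
      have h1 : 1 + 2 * (v : ℝ) * (1 / (2 * a ^ 2)) = (a ^ 2 + σ ^ 2) / a ^ 2 := by
        have ha' : a ≠ 0 := by intro h; rw [h] at ha; simp at ha
        rw [hvcoe]; field_simp
      rw [h1, Real.sqrt_div (by positivity), Real.sqrt_sq_eq_abs, div_div_eq_mul_div,
        mul_div_assoc]
    set h : ℝ → ℝ := fun z => Real.exp (-(max (z / a) 0) ^ 2 / 2) with hh_def
    have hm : Measurable h := by fun_prop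
    have h0 : ∀ z, 0 ≤ h z := fun z => (Real.exp_pos _).le
    have h1 : ∀ z, h z ≤ 1 := fun z => Real.exp_le_one_iff.mpr (by nlinarith [sq_nonneg (max (z / a) 0)])
    have hslice : ∀ z : ℝ, μR ((fun x => (x, z)) ⁻¹' {p : ℝ × ℝ | a * p.1 < p.2})
        = ENNReal.ofReal (h z) := by
      intro z
      have : ((fun x => (x, z)) ⁻¹' {p : ℝ × ℝ | a * p.1 < p.2}) = Ioi (z / a) := by
        ext x
        simp [div_lt_iff_of_neg ha, mul_comm]
      rw [this, hμR_def, muR_Ioi]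
    rw [hP, Measure.prod_apply_symm hS]
    simp_rw [hslice]
    rw [gauss_lint v hv0 h hm h0 h1]
    have hsplit : ∫ z, gaussianPDFReal 0 v z * h z
        = 1 / 2 - 1 / 2 * (a / Real.sqrt (a ^ 2 + σ ^ 2)) := by
      rw [← integral_add_compl measurableSet_Iio
        (pdf_mul_int v h hm (fun z => abs_le.mpr ⟨by linarith [h0 z], h1 z⟩)), compl_Iio]
      have hIci : ∫ z in Ici (0:ℝ), gaussianPDFReal 0 v z * h z = 1 / 2 := by
        rw [setIntegral_congr_fun measurableSet_Ici
          (g := fun z => gaussianPDFReal 0 v z)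
          (fun z hz => by
            have : z / a ≤ 0 := div_nonpos_of_nonneg_of_nonpos hz ha.le
            simp [hh_def, max_eq_right this])]
        rw [integral_Ici_eq_integral_Ioi, G1]
      have hIio : ∫ z in Iio (0:ℝ), gaussianPDFReal 0 v z * h z
          = 1 / 2 * (|a| / Real.sqrt (a ^ 2 + σ ^ 2)) := by
        rw [setIntegral_congr_fun measurableSet_Iio
          (g := fun z => gaussianPDFReal 0 v z * Real.exp (-z ^ 2 * (1 / (2 * a ^ 2))))
          (fun z hz => by
            have hpos : 0 < z / a := div_pos_of_neg_of_neg hz ha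
            have : max (z / a) 0 = z / a := max_eq_left hpos.le
            simp only [hh_def, this]
            congr 1
            field_simp)]
        rw [← integral_Iic_eq_integral_Iio, ← neg_zero, ← integral_comp_neg_Ioi]
        rw [setIntegral_congr_fun measurableSet_Ioi
          (g := fun z => gaussianPDFReal 0 v z * Real.exp (-z ^ 2 * (1 / (2 * a ^ 2))))
          (fun z _ => by simp [gaussianPDFReal])]
        exact hG2
      rw [hIci, hIio, abs_of_neg ha]
      ring
    rw [hsplit, ENNReal.toReal_ofReal (by linarith [hdivle])]
    ring
  · -- a = 0
    subst ha
    have hset2 : {p : ℝ × ℝ | (0:ℝ) * p.1 < p.2} = (univ : Set ℝ) ×ˢ Ioi (0:ℝ) := by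
      ext p; simp
    rw [hP, hset2, Measure.prod_prod, measure_univ, one_mul,
      gaussianReal_apply_eq_integral 0 hv0, G1]
    rw [ENNReal.toReal_ofReal (by norm_num)]
    simp
  · -- a > 0
    have hk : (0:ℝ) ≤ 1 / (2 * a ^ 2) := by positivity
    have hG2 : ∫ z in Ioi (0:ℝ), gaussianPDFReal 0 v z * Real.exp (-z ^ 2 * (1 / (2 * a ^ 2)))
        = (1 / 2) * (|a| / Real.sqrt (a ^ 2 + σ ^ 2)) := by
      rw [gaussInt v hvpos _ hk]
      have h1 : 1 + 2 * (v : ℝ) * (1 / (2 * a ^ 2)) = (a ^ 2 + σ ^ 2) / a ^ 2 := by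
        have ha' : a ≠ 0 := by intro h; rw [h] at ha; simp at ha
        rw [hvcoe]; field_simp
      rw [h1, Real.sqrt_div (by positivity), Real.sqrt_sq_eq_abs, div_div_eq_mul_div,
        mul_div_assoc]
    set h : ℝ → ℝ := fun z => 1 - Real.exp (-(max (z / a) 0) ^ 2 / 2) with hh_def
    have hm : Measurable h := by fun_prop
    have h0 : ∀ z, 0 ≤ h z := fun z => by
      have h2 := Real.exp_le_one_iff.mpr (show -(max (z / a) 0) ^ 2 / 2 ≤ 0 by
        nlinarith [sq_nonneg (max (z / a) 0)])
      simp only [hh_def]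
      linarith
    have h1 : ∀ z, h z ≤ 1 := fun z => by
      have h2 := (Real.exp_pos (-(max (z / a) 0) ^ 2 / 2)).le
      simp only [hh_def]
      linarith
    have hslice : ∀ z : ℝ, μR ((fun x => (x, z)) ⁻¹' {p : ℝ × ℝ | a * p.1 < p.2})
        = ENNReal.ofReal (h z) := by
      intro z
      have : ((fun x => (x, z)) ⁻¹' {p : ℝ × ℝ | a * p.1 < p.2}) = Iio (z / a) := by
        ext x
        simp [lt_div_iff₀ ha, mul_comm]
      rw [this, hμR_def, muR_Iio]
    rw [hP, Measure.prod_apply_symm hS]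
    simp_rw [hslice]
    rw [gauss_lint v hv0 h hm h0 h1]
    have hind : (fun z => gaussianPDFReal 0 v z * h z)
        = (Ioi (0:ℝ)).indicator (fun z => gaussianPDFReal 0 v z
            * (1 - Real.exp (-z ^ 2 * (1 / (2 * a ^ 2))))) := by
      funext z
      rcases le_or_gt z 0 with hz | hz
      · have : z / a ≤ 0 := div_nonpos_of_nonpos_of_nonneg hz ha.le
        simp [Set.indicator_apply, not_lt.mpr hz, hh_def, max_eq_right this]
      · have : max (z / a) 0 = z / a := max_eq_left (div_pos hz ha).le
        simp only [Set.indicator_apply, mem_Ioi, hz, if_true, hh_def, this]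
        congr 2
        field_simp
    rw [hind, integral_indicator measurableSet_Ioi]
    have hint2 : IntegrableOn (fun z => gaussianPDFReal 0 v z
        * Real.exp (-z ^ 2 * (1 / (2 * a ^ 2)))) (Ioi 0) :=
      (pdf_mul_int v _ (by fun_prop) (fun z => by
        rw [abs_of_pos (Real.exp_pos _)]
        exact Real.exp_le_one_iff.mpr (by nlinarith [sq_nonneg z]))).restrict
    simp_rw [mul_sub, mul_one]
    rw [integral_sub ((integrable_gaussianPDFReal 0 v).restrict) hint2, G1, hG2,
      abs_of_pos ha]
    rw [ENNReal.toReal_ofReal (by linarith [hdivle])]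
end

section
/- Let r be the autocovariance function of a stationary Gaussian process, normalized so that r(0) = 1, twice continuously differentiable with r''(0) < 0. Fix t > 0 with |r(t)| < 1 and σ²(t) := 1 − r(t)² + r'(t)²/r''(0) > 0. Let R be a standard Rayleigh random variable (density x e^{-x²/2} on (0,∞)), let Z be a centered Gaussian random variable with variance σ²(t) independent of R, and let X_0(t) = −R · r'(t)/√(−r''(0)) + Z be the value of the Slepian model at time t. Then the expected value of the clipped Slepian model satisfies E[sgn(X_0(t))] = −(1/√(−r''(0))) · r'(t) / √(1 − r(t)²). -/
open MeasureTheory ProbabilityTheory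

section SlepianAux

open Real Set Filter NNReal ENNReal

noncomputable def rayDen (x : ℝ) : ℝ := if 0 < x then x * Real.exp (-x ^ 2 / 2) else 0

noncomputable def muR : Measure ℝ := volume.withDensity (fun x => ENNReal.ofReal (rayDen x))

lemma measurable_rayDen : Measurable rayDen := by
  unfold rayDen
  exact Measurable.ite measurableSet_Ioi (measurable_id.mul (by fun_prop)) measurable_const

lemma hasDerivAt_negexp (x : ℝ) :
    HasDerivAt (fun y => -Real.exp (-y ^ 2 / 2)) (x * Real.exp (-x ^ 2 / 2)) x := by
  have h1 : HasDerivAt (fun y : ℝ => -y ^ 2 / 2) (-x) x := by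
    have := ((hasDerivAt_pow 2 x).neg).div_const 2
    simpa using this.congr_deriv (by ring)
  have := (h1.exp).neg
  exact this.congr_deriv (by ring)

lemma integral_rayDen_Ioc {u : ℝ} (hu : 0 ≤ u) :
    ∫ x in Set.Ioc 0 u, x * Real.exp (-x ^ 2 / 2) = 1 - Real.exp (-u ^ 2 / 2) := by
  rw [← intervalIntegral.integral_of_le hu]
  have := intervalIntegral.integral_eq_sub_of_hasDerivAt (f := fun y => -Real.exp (-y ^ 2 / 2))
    (f' := fun x => x * Real.exp (-x ^ 2 / 2)) (a := 0) (b := u)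
    (fun x _ => hasDerivAt_negexp x) ?_
  · rw [this]; simp; ring
  · apply Continuous.intervalIntegrable; fun_prop

lemma measurable_sign : Measurable Real.sign := by
  unfold Real.sign
  exact Measurable.ite (measurableSet_lt measurable_id measurable_const) measurable_const
    (Measurable.ite (measurableSet_lt measurable_const measurable_id) measurable_const
      measurable_const)

lemma rayDen_ofReal_indicator (x : ℝ) :
    ENNReal.ofReal (rayDen x) =
      Set.indicator (Set.Ioi 0) (fun x => ENNReal.ofReal (x * Real.exp (-x ^ 2 / 2))) x := by
  unfold rayDen
  by_cases h : 0 < x <;> simp [h, Set.indicator, Set.mem_Ioi]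

lemma muR_apply {s : Set ℝ} (hs : MeasurableSet s) :
    muR s = ∫⁻ x in Set.Ioi 0 ∩ s, ENNReal.ofReal (x * Real.exp (-x ^ 2 / 2)) := by
  rw [muR, withDensity_apply _ hs]
  simp_rw [rayDen_ofReal_indicator]
  rw [lintegral_indicator measurableSet_Ioi, Measure.restrict_restrict measurableSet_Ioi]

lemma lint_ofReal_eq {s : Set ℝ} (hs : MeasurableSet s) (hint : IntegrableOn (fun x : ℝ => x * Real.exp (-x ^ 2 / 2)) s)
    (hnn : ∀ x ∈ s, 0 ≤ x) :
    ∫⁻ x in s, ENNReal.ofReal (x * Real.exp (-x ^ 2 / 2))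
      = ENNReal.ofReal (∫ x in s, x * Real.exp (-x ^ 2 / 2)) := by
  rw [← ofReal_integral_eq_lintegral_ofReal hint]
  exact (ae_restrict_iff' hs).2 (Filter.Eventually.of_forall fun x hx =>
    mul_nonneg (hnn x hx) (Real.exp_pos _).le)

lemma muR_Iio_nonpos {u : ℝ} (hu : u ≤ 0) : muR (Set.Iio u) = 0 := by
  rw [muR_apply measurableSet_Iio]
  have : Set.Ioi (0:ℝ) ∩ Set.Iio u = ∅ := by
    ext x; simp only [Set.mem_inter_iff, Set.mem_Ioi, Set.mem_Iio, Set.mem_empty_iff_false,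
      iff_false, not_and]
    intro hx; linarith
  simp [this]

lemma muR_Iio_nonneg {u : ℝ} (hu : 0 ≤ u) :
    muR (Set.Iio u) = ENNReal.ofReal (1 - Real.exp (-u ^ 2 / 2)) := by
  rw [muR_apply measurableSet_Iio]
  have hset : Set.Ioi (0:ℝ) ∩ Set.Iio u = Set.Ioo 0 u := by ext x; simp [and_comm]
  rw [hset, lint_ofReal_eq measurableSet_Ioo
    ((Continuous.integrableOn_Ioc (by fun_prop)).mono_set Set.Ioo_subset_Ioc_self)
    (fun x hx => hx.1.le)]
  rw [← MeasureTheory.integral_Ioc_eq_integral_Ioo, integral_rayDen_Ioc hu]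

lemma integrableOn_rayDen_Ioi :
    IntegrableOn (fun x : ℝ => x * Real.exp (-x ^ 2 / 2)) (Set.Ioi 0) := by
  have htend : Tendsto (fun y : ℝ => -Real.exp (-y ^ 2 / 2)) atTop (nhds 0) := by
    rw [show (0:ℝ) = -0 by ring]
    apply Tendsto.neg
    apply Real.tendsto_exp_atBot.comp
    apply Tendsto.atBot_div_const (by norm_num)
    exact tendsto_neg_atTop_atBot.comp (tendsto_pow_atTop two_ne_zero)
  exact integrableOn_Ioi_deriv_of_nonneg (Continuous.continuousWithinAt (by continuity))
    (fun x hx => hasDerivAt_negexp x)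
    (fun x hx => mul_nonneg (le_of_lt hx) (Real.exp_pos _).le) htend

lemma integral_rayDen_Ioi : ∫ x in Set.Ioi 0, x * Real.exp (-x ^ 2 / 2) = 1 := by
  have htend : Tendsto (fun y : ℝ => -Real.exp (-y ^ 2 / 2)) atTop (nhds 0) := by
    rw [show (0:ℝ) = -0 by ring]
    apply Tendsto.neg
    apply Real.tendsto_exp_atBot.comp
    apply Tendsto.atBot_div_const (by norm_num)
    exact tendsto_neg_atTop_atBot.comp (tendsto_pow_atTop two_ne_zero)
  have := integral_Ioi_of_hasDerivAt_of_nonneg (g := fun y => -Real.exp (-y ^ 2 / 2))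
    (g' := fun x => x * Real.exp (-x ^ 2 / 2)) (a := 0) (l := 0)
    (Continuous.continuousWithinAt (by continuity)) (fun x hx => hasDerivAt_negexp x)
    (fun x hx => mul_nonneg (le_of_lt hx) (Real.exp_pos _).le) htend
  rw [this]; simp

instance : IsProbabilityMeasure muR := by
  constructor
  rw [muR_apply MeasurableSet.univ, Set.inter_univ,
    lint_ofReal_eq measurableSet_Ioi integrableOn_rayDen_Ioi (fun x hx => le_of_lt hx),
    integral_rayDen_Ioi]
  simp

lemma integral_exp_neg_mul_sq_Iio {k : ℝ} (hk : 0 < k) :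
    ∫ z in Set.Iio (0:ℝ), Real.exp (-k * z ^ 2) = Real.sqrt (π / k) / 2 := by
  have h := integral_comp_neg_Ioi (0:ℝ) (fun z => Real.exp (-k * z ^ 2))
  simp only [neg_sq] at h
  rw [neg_zero] at h
  rw [← MeasureTheory.integral_Iic_eq_integral_Iio, ← h, integral_gaussian_Ioi]

lemma sqrt_alg {w a : ℝ} (hw : 0 < w) (ha : 0 < a) :
    (Real.sqrt (2 * π * w))⁻¹ * Real.sqrt (π / (1/(2*w) + 1/(2*a^2)))
      = a / Real.sqrt (a ^ 2 + w) := by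
  have h2 : π / (1/(2*w) + 1/(2*a^2)) = (2*π*w) * (a^2 / (a^2 + w)) := by
    field_simp
  have hpw : (0:ℝ) ≤ 2*π*w := by positivity
  rw [h2, Real.sqrt_mul hpw, ← mul_assoc, inv_mul_cancel₀ (by positivity), one_mul,
    Real.sqrt_div (sq_nonneg a), Real.sqrt_sq ha.le]

lemma sqrt_alg0 {w : ℝ} (hw : 0 < w) :
    (Real.sqrt (2 * π * w))⁻¹ * Real.sqrt (π / (1/(2*w))) = 1 := by
  have h2 : π / (1/(2*w)) = 2*π*w := by field_simp
  rw [h2, inv_mul_cancel₀ (by positivity)]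

lemma gauss_piece {v : ℝ≥0} (hv : v ≠ 0) {k : ℝ} (hk : 0 ≤ k) :
    ∫ z in Set.Iio (0:ℝ), gaussianPDFReal 0 v z * Real.exp (-k * z ^ 2)
      = (Real.sqrt (2*π*(v:ℝ)))⁻¹ * (Real.sqrt (π / (1/(2*(v:ℝ)) + k)) / 2) := by
  have hw : (0:ℝ) < (v:ℝ) := by
    exact_mod_cast pos_iff_ne_zero.2 hv
  have hk' : 0 < 1/(2*(v:ℝ)) + k := by positivity
  have hcong : ∀ z : ℝ, gaussianPDFReal 0 v z * Real.exp (-k * z ^ 2)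
      = (Real.sqrt (2*π*(v:ℝ)))⁻¹ * Real.exp (-(1/(2*(v:ℝ)) + k) * z ^ 2) := by
    intro z
    unfold gaussianPDFReal
    rw [mul_assoc, ← Real.exp_add]
    congr 2
    field_simp
    ring
  simp_rw [hcong]
  rw [MeasureTheory.integral_const_mul, integral_exp_neg_mul_sq_Iio hk']

lemma J_eq {v : ℝ≥0} (hv : v ≠ 0) {a : ℝ} (ha : 0 < a) :
    ∫ z, Set.indicator (Set.Iio 0) (fun z => 1 - Real.exp (-(1/(2*a^2)) * z ^ 2)) z
        ∂(gaussianReal 0 v)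
      = 1/2 - a / (2 * Real.sqrt (a^2 + (v:ℝ))) := by
  have hw : (0:ℝ) < (v:ℝ) := by exact_mod_cast pos_iff_ne_zero.2 hv
  have hk : (0:ℝ) < 1/(2*a^2) := by positivity
  rw [gaussianReal_of_var_ne_zero _ hv]
  have hpdf : (gaussianPDF 0 v) = fun z => (((gaussianPDFReal 0 v z).toNNReal : ℝ≥0) : ℝ≥0∞) :=
    rfl
  rw [hpdf, integral_withDensity_eq_integral_smul
    (f := fun z => (gaussianPDFReal 0 v z).toNNReal)
    (measurable_gaussianPDFReal 0 v).real_toNNReal]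
  have hsm : ∀ z : ℝ, ((gaussianPDFReal 0 v z).toNNReal : ℝ≥0)
        • Set.indicator (Set.Iio 0) (fun z => 1 - Real.exp (-(1/(2*a^2)) * z ^ 2)) z
      = Set.indicator (Set.Iio 0)
          (fun z => gaussianPDFReal 0 v z * (1 - Real.exp (-(1/(2*a^2)) * z ^ 2))) z := by
    intro z
    rw [NNReal.smul_def, Real.coe_toNNReal _ (gaussianPDFReal_nonneg 0 v z)]
    by_cases h : z ∈ Set.Iio (0:ℝ) <;> simp [h]
  simp_rw [hsm]
  rw [MeasureTheory.integral_indicator measurableSet_Iio]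
  have hint1 : IntegrableOn (fun z => gaussianPDFReal 0 v z) (Set.Iio 0) volume :=
    (integrable_gaussianPDFReal 0 v).integrableOn
  have hint2 : IntegrableOn
      (fun z => gaussianPDFReal 0 v z * Real.exp (-(1/(2*a^2)) * z ^ 2)) (Set.Iio 0) volume := by
    apply Integrable.integrableOn
    apply Integrable.mono' (integrable_gaussianPDFReal 0 v)
    · exact ((stronglyMeasurable_gaussianPDFReal 0 v).measurable.mul (by fun_prop)
        ).aestronglyMeasurable
    · refine Filter.Eventually.of_forall fun z => ?_
      rw [norm_mul, Real.norm_eq_abs, Real.norm_eq_abs,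
        abs_of_nonneg (gaussianPDFReal_nonneg 0 v z), abs_of_nonneg (Real.exp_pos _).le]
      nth_rewrite 2 [← mul_one (gaussianPDFReal 0 v z)]
      exact mul_le_mul_of_nonneg_left
        (Real.exp_le_one_iff.2 (by nlinarith [sq_nonneg z])) (gaussianPDFReal_nonneg 0 v z)
  have hsplit : ∀ z : ℝ, gaussianPDFReal 0 v z * (1 - Real.exp (-(1/(2*a^2)) * z ^ 2))
      = gaussianPDFReal 0 v z - gaussianPDFReal 0 v z * Real.exp (-(1/(2*a^2)) * z ^ 2) := by
    intro z; ring
  simp_rw [hsplit]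
  rw [MeasureTheory.integral_sub hint1 hint2]
  have h1 : ∫ z in Set.Iio (0:ℝ), gaussianPDFReal 0 v z = 1/2 := by
    have := gauss_piece hv (k := 0) le_rfl
    simp only [neg_zero, zero_mul, Real.exp_zero, mul_one, add_zero] at this
    rw [this, ← mul_div_assoc, sqrt_alg0 hw]
  have h2 : ∫ z in Set.Iio (0:ℝ), gaussianPDFReal 0 v z * Real.exp (-(1/(2*a^2)) * z ^ 2)
      = a / (2 * Real.sqrt (a^2 + (v:ℝ))) := by
    rw [gauss_piece hv hk.le, ← mul_div_assoc, sqrt_alg hw ha]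
    rw [div_div]
    ring_nf
  rw [h1, h2]

lemma key_pos {v : ℝ≥0} (hv : v ≠ 0) {a : ℝ} (ha : 0 < a) :
    ∫ p : ℝ × ℝ, Real.sign (a * p.1 + p.2) ∂(muR.prod (gaussianReal 0 v))
      = a / Real.sqrt (a ^ 2 + (v:ℝ)) := by
  have hw : (0:ℝ) < (v:ℝ) := by exact_mod_cast pos_iff_ne_zero.2 hv
  set muZ := gaussianReal 0 v with hmuZ
  set P := muR.prod muZ with hP
  have hl : Measurable (fun p : ℝ × ℝ => a * p.1 + p.2) := by fun_prop
  set B := {p : ℝ × ℝ | a * p.1 + p.2 < 0} with hBdef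
  set C := {p : ℝ × ℝ | a * p.1 + p.2 = 0} with hCdef
  set A := {p : ℝ × ℝ | 0 < a * p.1 + p.2} with hAdef
  have hB : MeasurableSet B := measurableSet_lt hl measurable_const
  have hC : MeasurableSet C := hl (measurableSet_singleton 0)
  have hA : MeasurableSet A := measurableSet_lt measurable_const hl
  have hsq : (0:ℝ) < Real.sqrt (a^2 + (v:ℝ)) := Real.sqrt_pos.2 (by positivity)
  have hle : a / (2 * Real.sqrt (a^2 + (v:ℝ))) ≤ 1/2 := by
    rw [div_le_div_iff₀ (by positivity) (by norm_num)]
    have : a ≤ Real.sqrt (a^2 + (v:ℝ)) := by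
      rw [show a = Real.sqrt (a^2) by rw [Real.sqrt_sq ha.le]]
      exact Real.sqrt_le_sqrt (by nlinarith [Real.sq_sqrt (sq_nonneg a)])
    nlinarith
  have hPB : P B = ENNReal.ofReal (1/2 - a / (2 * Real.sqrt (a^2 + (v:ℝ)))) := by
    rw [Measure.prod_apply_symm hB]
    have hpre : ∀ z : ℝ, muR ((fun x => (x, z)) ⁻¹' B)
        = ENNReal.ofReal (Set.indicator (Set.Iio 0)
            (fun z => 1 - Real.exp (-(1/(2*a^2)) * z ^ 2)) z) := by
      intro z
      have hpre' : ((fun x => (x, z)) ⁻¹' B) = Set.Iio (-z/a) := by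
        ext x
        simp only [Set.mem_preimage, Set.mem_Iio, hBdef, Set.mem_setOf_eq]
        rw [lt_div_iff₀ ha]
        constructor <;> intro h <;> nlinarith
      rw [hpre']
      rcases lt_or_ge z 0 with hz | hz
      · rw [muR_Iio_nonneg (div_nonneg (by linarith) ha.le)]
        congr 1
        rw [Set.indicator_of_mem (show z ∈ Set.Iio (0:ℝ) from hz)]
        have harg : -(-z / a) ^ 2 / 2 = -(1 / (2 * a ^ 2)) * z ^ 2 := by
          rw [div_pow, neg_sq]
          field_simp
        rw [harg]
      · rw [muR_Iio_nonpos (by rw [neg_div]; simp [div_nonneg hz ha.le]),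
          Set.indicator_of_notMem (by simpa using hz)]
        simp
    simp_rw [hpre]
    rw [← ofReal_integral_eq_lintegral_ofReal ?_ ?_]
    · rw [J_eq hv ha]
    · apply Integrable.mono' (integrable_const (1:ℝ))
      · exact (((by fun_prop : Continuous (fun z : ℝ => 1 - Real.exp (-(1/(2*a^2)) * z ^ 2)))
          ).aestronglyMeasurable).indicator measurableSet_Iio
      · refine Filter.Eventually.of_forall fun z => ?_
        rw [Real.norm_eq_abs, abs_le]
        by_cases h : z ∈ Set.Iio (0:ℝ)
        · rw [Set.indicator_of_mem h]
          have he1 : Real.exp (-(1/(2*a^2)) * z ^ 2) ≤ 1 :=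
            Real.exp_le_one_iff.2 (by rw [neg_mul]; exact neg_nonpos.2 (by positivity))
          have he0 := Real.exp_pos (-(1/(2*a^2)) * z ^ 2)
          exact ⟨by linarith, by linarith⟩
        · rw [Set.indicator_of_notMem h]; norm_num
    · refine Filter.Eventually.of_forall fun z => ?_
      apply Set.indicator_nonneg
      intro z' _
      have he1 : Real.exp (-(1/(2*a^2)) * z' ^ 2) ≤ 1 :=
        Real.exp_le_one_iff.2 (by rw [neg_mul]; exact neg_nonpos.2 (by positivity))
      linarith
  have hPC : P C = 0 := by
    rw [Measure.prod_apply_symm hC]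
    have hpre : ∀ z : ℝ, muR ((fun x => (x, z)) ⁻¹' C) = 0 := by
      intro z
      have hpre' : ((fun x => (x, z)) ⁻¹' C) = {-z/a} := by
        ext x
        simp only [Set.mem_preimage, Set.mem_singleton_iff, hCdef, Set.mem_setOf_eq,
          eq_div_iff ha.ne']
        constructor <;> intro h <;> nlinarith
      rw [hpre', muR]
      exact withDensity_absolutelyContinuous volume _ (measure_singleton _)
    simp_rw [hpre]
    simp
  have hAcompl : A = (B ∪ C)ᶜ := by
    ext p
    simp only [hAdef, hBdef, hCdef, Set.mem_compl_iff, Set.mem_union, Set.mem_setOf_eq]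
    constructor
    · intro h
      push_neg
      exact ⟨by linarith, by linarith⟩
    · intro h
      push_neg at h
      exact lt_of_le_of_ne h.1 (Ne.symm h.2)
  have hPBC : P (B ∪ C) = P B :=
    le_antisymm ((measure_union_le B C).trans (by rw [hPC, add_zero]))
      (measure_mono Set.subset_union_left)
  have hPA : P A = 1 - P B := by
    rw [hAcompl, measure_compl (hB.union hC) (measure_ne_top _ _), hPBC, measure_univ]
  have hsign : ∀ p : ℝ × ℝ, Real.sign (a * p.1 + p.2)
      = Set.indicator A (fun _ => (1:ℝ)) p - Set.indicator B (fun _ => (1:ℝ)) p := by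
    intro p
    rcases lt_trichotomy (a * p.1 + p.2) 0 with h | h | h
    · rw [Real.sign_of_neg h, Set.indicator_of_notMem (by simp [hAdef]; linarith),
        Set.indicator_of_mem (by simpa [hBdef] using h)]
      norm_num
    · rw [h, Real.sign_zero, Set.indicator_of_notMem (by simp [hAdef, h]),
        Set.indicator_of_notMem (by simp [hBdef, h])]
      norm_num
    · rw [Real.sign_of_pos h, Set.indicator_of_mem (by simpa [hAdef] using h),
        Set.indicator_of_notMem (by simp [hBdef]; linarith)]
      norm_num
  simp_rw [hsign]
  rw [MeasureTheory.integral_sub ((integrable_const (1:ℝ)).indicator hA)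
    ((integrable_const (1:ℝ)).indicator hB)]
  rw [MeasureTheory.integral_indicator hA, MeasureTheory.integral_indicator hB,
    setIntegral_const, setIntegral_const, smul_eq_mul, smul_eq_mul, mul_one, mul_one]
  rw [measureReal_def, measureReal_def, hPA, hPB]
  rw [ENNReal.toReal_sub_of_le (by rw [← hPB]; exact prob_le_one) ENNReal.one_ne_top]
  rw [ENNReal.toReal_one, ENNReal.toReal_ofReal (by linarith)]
  field_simp
  ring

lemma muZ_map_neg (v : ℝ≥0) : (gaussianReal 0 v).map (fun z : ℝ => -z) = gaussianReal 0 v := by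
  have h := gaussianReal_map_const_mul (μ := 0) (v := v) (-1 : ℝ)
  have h2 : (fun z : ℝ => -z) = ((-1 : ℝ) * ·) := by funext z; ring
  have h3 : (⟨(-1:ℝ)^2, sq_nonneg _⟩ : ℝ≥0) = 1 := by ext; norm_num
  rw [h2, h, mul_zero]
  congr 1
  ext
  simp

lemma sign_int_zero (v : ℝ≥0) : ∫ z, Real.sign z ∂(gaussianReal 0 v) = 0 := by
  have h : ∫ z, Real.sign z ∂(gaussianReal 0 v)
      = ∫ z, Real.sign z ∂((gaussianReal 0 v).map (fun z : ℝ => -z)) := by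
    rw [muZ_map_neg]
  rw [integral_map (by fun_prop) measurable_sign.aestronglyMeasurable] at h
  simp_rw [Real.sign_neg] at h
  rw [integral_neg] at h
  linarith

lemma key (v : ℝ≥0) (hv : v ≠ 0) (a : ℝ) :
    ∫ p : ℝ × ℝ, Real.sign (a * p.1 + p.2) ∂(muR.prod (gaussianReal 0 v))
      = a / Real.sqrt (a ^ 2 + (v:ℝ)) := by
  rcases lt_trichotomy a 0 with ha | ha | ha
  · have hT : (muR.prod (gaussianReal 0 v)).map (Prod.map (id : ℝ → ℝ) (fun z : ℝ => -z))
        = muR.prod (gaussianReal 0 v) := by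
      rw [← Measure.map_prod_map _ _ measurable_id measurable_neg, Measure.map_id, muZ_map_neg]
    have h : ∫ p : ℝ × ℝ, Real.sign (a * p.1 + p.2) ∂(muR.prod (gaussianReal 0 v))
        = ∫ p : ℝ × ℝ, Real.sign (a * p.1 + (-p.2)) ∂(muR.prod (gaussianReal 0 v)) := by
      nth_rewrite 1 [← hT]
      rw [integral_map (φ := Prod.map (id : ℝ → ℝ) (fun z : ℝ => -z))
        (measurable_id.prodMap measurable_neg).aemeasurable
        (show Measurable fun p : ℝ × ℝ => Real.sign (a * p.1 + p.2) from
          measurable_sign.comp (by fun_prop)).aestronglyMeasurable]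
      rfl
    have h2 : ∀ p : ℝ × ℝ, Real.sign (a * p.1 + (-p.2)) = -Real.sign ((-a) * p.1 + p.2) := by
      intro p
      rw [show a * p.1 + -p.2 = -((-a) * p.1 + p.2) by ring, Real.sign_neg]
    simp_rw [h2] at h
    rw [integral_neg, key_pos hv (by linarith : 0 < -a)] at h
    rw [h, neg_sq]
    field_simp
  · subst ha
    simp_rw [zero_mul, zero_add]
    have hmap : (muR.prod (gaussianReal 0 v)).map Prod.snd = gaussianReal 0 v := by
      rw [Measure.map_snd_prod]
      simp
    have h0 : ∫ p : ℝ × ℝ, Real.sign p.2 ∂(muR.prod (gaussianReal 0 v))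
        = ∫ z, Real.sign z ∂((muR.prod (gaussianReal 0 v)).map Prod.snd) :=
      (integral_map measurable_snd.aemeasurable measurable_sign.aestronglyMeasurable).symm
    rw [h0, hmap, sign_int_zero]
    simp
  · exact key_pos hv ha

end SlepianAux

/-- The expectation of the clipped Slepian model at a fixed time `t`:
if `X₀(t) = −R·r'(t)/√(−r''(0)) + Z` with `R` standard Rayleigh and `Z` an independent
centered Gaussian with variance `σ²(t) = 1 − r(t)² + r'(t)²/r''(0) > 0`, then
`𝔼[sgn(X₀(t))] = −(1/√(−r''(0)))·r'(t)/√(1 − r(t)²)`. -/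
theorem stmt_7
    {Ω : Type*} [MeasureSpace Ω] [IsProbabilityMeasure (ℙ : Measure Ω)]
    (r : ℝ → ℝ) (t σ2 : ℝ) (R Z X₀ : Ω → ℝ)
    (hr : ContDiff ℝ 2 r) (hr0 : r 0 = 1) (hr'' : deriv (deriv r) 0 < 0)
    (ht : 0 < t) (hrt : |r t| < 1)
    (hσ2 : σ2 = 1 - r t ^ 2 + (deriv r t) ^ 2 / deriv (deriv r) 0)
    (hσ2pos : 0 < σ2)
    (hRmeas : Measurable R) (hZmeas : Measurable Z)
    (hRlaw : Measure.map R ℙ = volume.withDensity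
      (fun x => ENNReal.ofReal (if 0 < x then x * Real.exp (-x ^ 2 / 2) else 0)))
    (hZlaw : Measure.map Z ℙ = gaussianReal 0 (Real.toNNReal σ2))
    (hindep : IndepFun R Z ℙ)
    (hX : ∀ ω, X₀ ω = -R ω * (deriv r t / Real.sqrt (-(deriv (deriv r) 0))) + Z ω) :
    ∫ ω, Real.sign (X₀ ω) ∂ℙ
      = -(1 / Real.sqrt (-(deriv (deriv r) 0)))
          * (deriv r t / Real.sqrt (1 - r t ^ 2)) := by
  set β := deriv (deriv r) 0 with hβdef
  set s := Real.sqrt (-β) with hsdef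
  have hspos : 0 < s := Real.sqrt_pos.2 (by linarith)
  have hs2 : s ^ 2 = -β := Real.sq_sqrt (by linarith)
  set a := -(deriv r t / s) with hadef
  set v := Real.toNNReal σ2 with hvdef
  have hv : v ≠ 0 := (Real.toNNReal_pos.2 hσ2pos).ne'
  have hvr : (v : ℝ) = σ2 := Real.coe_toNNReal _ hσ2pos.le
  have hmuR : Measure.map R ℙ = muR := hRlaw
  have hstep1 : ∀ ω, Real.sign (X₀ ω) = Real.sign (a * R ω + Z ω) := by
    intro ω
    rw [hX ω]
    congr 1
    ring
  simp_rw [hstep1]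
  have hjoint : Measure.map (fun ω => (R ω, Z ω)) ℙ = muR.prod (gaussianReal 0 v) := by
    rw [(indepFun_iff_map_prod_eq_prod_map_map hRmeas.aemeasurable
      hZmeas.aemeasurable).mp hindep, hmuR, hZlaw]
  have hstep2 : ∫ ω, Real.sign (a * R ω + Z ω) ∂ℙ
      = ∫ p : ℝ × ℝ, Real.sign (a * p.1 + p.2) ∂(muR.prod (gaussianReal 0 v)) := by
    rw [← hjoint, integral_map (hRmeas.prodMk hZmeas).aemeasurable
      (show Measurable fun p : ℝ × ℝ => Real.sign (a * p.1 + p.2) from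
        measurable_sign.comp (by fun_prop)).aestronglyMeasurable]
  rw [hstep2, key v hv a, hvr]
  have hq : (0:ℝ) < 1 - r t ^ 2 := by
    have := abs_lt.1 hrt
    nlinarith
  have hqpos : 0 < Real.sqrt (1 - r t ^ 2) := Real.sqrt_pos.2 hq
  have ha2 : a ^ 2 + σ2 = 1 - r t ^ 2 := by
    have hβne : β ≠ 0 := ne_of_lt hr''
    have hsne : s ≠ 0 := hspos.ne'
    have haa : a ^ 2 = (deriv r t) ^ 2 / (-β) := by
      rw [hadef, ← hs2]
      rw [neg_pow]
      simp [div_pow]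
    rw [haa, hσ2, div_neg]
    ring
  rw [ha2, hadef]
  field_simp
end

section
/- Let (T̃_i)_{i≥1} be i.i.d. nonnegative random variables and let b > 0 be such that P(T̃_1 > τ) ≥ e^{-bτ} for all τ > 0. Then for every k ≥ 1 and every τ > 0, P(T̃_1 + ... + T̃_k > τ) ≥ e^{-bτ} · Σ_{j=0}^{k-1} (bτ)^j / j!. -/
open MeasureTheory ProbabilityTheory

noncomputable def Ffn (b : ℝ) (k : ℕ) (u : ℝ) : ℝ :=
  Real.exp (-(b*u)) * ∑ j ∈ Finset.range k, (b*u)^j / (Nat.factorial j)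

noncomputable def Gfn (b : ℝ) (k : ℕ) (s : ℝ) : ℝ := Ffn b k (max s 0)

noncomputable def psi (b τ : ℝ) (m : ℕ) (s : ℝ) : ℝ :=
  b * (Real.exp (-(b*(τ-s))) * (b*(τ-s))^m / (Nat.factorial m))

lemma hasDerivAt_Ffn (b : ℝ) (m : ℕ) (u : ℝ) :
    HasDerivAt (Ffn b (m+1))
      (-(b * (Real.exp (-(b*u)) * (b*u)^m / (Nat.factorial m)))) u := by
  have hlin : HasDerivAt (fun u : ℝ => -(b*u)) (-b) u := by
    simpa [neg_mul] using ((hasDerivAt_id u).const_mul (-b))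
  have hexp : HasDerivAt (fun u : ℝ => Real.exp (-(b*u))) (Real.exp (-(b*u)) * (-b)) u :=
    hlin.exp
  have hbu : HasDerivAt (fun u : ℝ => b * u) b u := by
    simpa using (hasDerivAt_id u).const_mul b
  have hterm : ∀ j : ℕ, HasDerivAt (fun u : ℝ => (b*u)^j / (Nat.factorial j))
      ((j * (b*u)^(j-1) * b) / (Nat.factorial j)) u := by
    intro j
    exact ((hasDerivAt_pow j (b*u)).comp u hbu).div_const _
  have hsum : HasDerivAt (fun u : ℝ => ∑ j ∈ Finset.range (m+1), (b*u)^j / (Nat.factorial j))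
      (∑ j ∈ Finset.range (m+1), (j * (b*u)^(j-1) * b) / (Nat.factorial j)) u :=
    HasDerivAt.fun_sum (fun j _ => hterm j)
  have hsumval : (∑ j ∈ Finset.range (m+1), ((j:ℝ) * (b*u)^(j-1) * b) / (Nat.factorial j))
      = b * ∑ j ∈ Finset.range m, (b*u)^j / (Nat.factorial j) := by
    rw [Finset.sum_range_succ']
    simp only [Nat.cast_zero, zero_mul, Nat.factorial_zero, Nat.cast_one, div_one, zero_div,
      add_zero]
    rw [Finset.mul_sum]
    refine Finset.sum_congr rfl fun j _ => ?_
    have hf : (Nat.factorial (j+1) : ℝ) = (j+1) * Nat.factorial j := by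
      push_cast [Nat.factorial_succ]; ring
    rw [hf]
    have h1 : (Nat.factorial j : ℝ) ≠ 0 := Nat.cast_ne_zero.mpr (Nat.factorial_ne_zero j)
    have h2 : ((j:ℝ)+1) ≠ 0 := by positivity
    simp only [Nat.add_sub_cancel, Nat.cast_add, Nat.cast_one]
    field_simp
  rw [hsumval] at hsum
  have hmul := hexp.mul hsum
  have hP : (∑ j ∈ Finset.range (m+1), (b*u)^j / (Nat.factorial j))
      = (∑ j ∈ Finset.range m, (b*u)^j / (Nat.factorial j)) + (b*u)^m / (Nat.factorial m) :=
    Finset.sum_range_succ _ m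
  have : HasDerivAt (Ffn b (m+1))
      (Real.exp (-(b*u)) * (-b) * (∑ j ∈ Finset.range (m+1), (b*u)^j / (Nat.factorial j))
        + Real.exp (-(b*u)) * (b * ∑ j ∈ Finset.range m, (b*u)^j / (Nat.factorial j))) u := hmul
  convert this using 1
  rw [hP]
  ring

lemma psi_cont (b τ : ℝ) (m : ℕ) : Continuous (psi b τ m) := by
  unfold psi; continuity

lemma psi_nonneg {b τ : ℝ} (hb : 0 < b) (m : ℕ) {s : ℝ} (hs : s ≤ τ) : 0 ≤ psi b τ m s := by
  unfold psi
  have h1 : (0:ℝ) ≤ b*(τ-s) := by nlinarith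
  have h2 : (0:ℝ) ≤ (b*(τ-s))^m := pow_nonneg h1 m
  positivity

lemma Ffn_nonneg {b : ℝ} (hb : 0 < b) (k : ℕ) {u : ℝ} (hu : 0 ≤ u) : 0 ≤ Ffn b k u := by
  unfold Ffn
  have : (0:ℝ) ≤ ∑ j ∈ Finset.range k, (b*u)^j / (Nat.factorial j) := by
    apply Finset.sum_nonneg
    intro j _
    have : (0:ℝ) ≤ (b*u)^j := pow_nonneg (by nlinarith) j
    positivity
  positivity

lemma Ffn_zero (b : ℝ) (k : ℕ) : Ffn b (k+1) 0 = 1 := by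
  unfold Ffn
  rw [Finset.sum_eq_single 0]
  · simp
  · intro j _ hj
    simp [zero_pow hj]
  · intro h
    simp at h

lemma ftc1 (b τ : ℝ) (m : ℕ) (x : ℝ) (hx : 0 ≤ x) (_hxτ : x ≤ τ) :
    ∫ s in Set.Ioc 0 x, psi b τ m s = Ffn b (m+1) (τ - x) - Ffn b (m+1) τ := by
  have key : ∀ s ∈ Set.uIcc (0:ℝ) x, HasDerivAt (fun s => Ffn b (m+1) (τ - s)) (psi b τ m s) s := by
    intro s _
    have hin : HasDerivAt (fun s : ℝ => τ - s) (-1) s := (hasDerivAt_id s).const_sub τ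
    have := (hasDerivAt_Ffn b m (τ - s)).comp s hin
    simpa [psi, mul_comm, mul_assoc, mul_left_comm, Function.comp_def] using this
  have := intervalIntegral.integral_eq_sub_of_hasDerivAt key
    ((psi_cont b τ m).intervalIntegrable 0 x)
  rw [intervalIntegral.integral_of_le hx] at this
  simpa using this

lemma ftc2 (b τ : ℝ) (m : ℕ) (hτ : 0 ≤ τ) :
    ∫ s in Set.Ioc 0 τ, psi b τ m s * Real.exp (-(b*s))
      = Real.exp (-(b*τ)) * (b*τ)^(m+1) / (Nat.factorial (m+1)) := by
  have key : ∀ s ∈ Set.uIcc (0:ℝ) τ,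
      HasDerivAt (fun s => -(Real.exp (-(b*τ)) * (b*(τ-s))^(m+1) / (Nat.factorial (m+1))))
        (psi b τ m s * Real.exp (-(b*s))) s := by
    intro s _
    have hin : HasDerivAt (fun s : ℝ => b * (τ - s)) (-b) s := by
      simpa using ((hasDerivAt_id s).const_sub τ).const_mul b
    have hpow := (hasDerivAt_pow (m+1) (b*(τ-s))).comp s hin
    have h2 := ((hpow.const_mul (Real.exp (-(b*τ)))).div_const ((Nat.factorial (m+1)):ℝ)).fun_neg
    refine h2.congr_deriv ?_
    have hfac : ((Nat.factorial (m+1)):ℝ) = (m+1) * (Nat.factorial m) := by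
      push_cast [Nat.factorial_succ]; ring
    have hms : Real.exp (-(b*(τ-s))) * Real.exp (-(b*s)) = Real.exp (-(b*τ)) := by
      rw [← Real.exp_add]; ring_nf
    have h1 : (Nat.factorial m : ℝ) ≠ 0 := Nat.cast_ne_zero.mpr (Nat.factorial_ne_zero m)
    have h2' : ((m:ℝ)+1) ≠ 0 := by positivity
    rw [← hms]
    simp only [psi, hfac, Nat.add_sub_cancel, Nat.cast_add, Nat.cast_one]
    field_simp
  have := intervalIntegral.integral_eq_sub_of_hasDerivAt key
    (((psi_cont b τ m).mul (by continuity)).intervalIntegrable 0 τ)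
  rw [intervalIntegral.integral_of_le hτ] at this
  rw [this]
  simp

lemma core {b : ℝ} (hb : 0 < b) (ν : Measure ℝ) [IsProbabilityMeasure ν]
    (hν0 : ν (Set.Iic 0) = 0)
    (hνtail : ∀ s : ℝ, 0 < s → ENNReal.ofReal (Real.exp (-(b*s))) ≤ ν (Set.Ioi s))
    (m : ℕ) (τ : ℝ) (hτ : 0 < τ) :
    ENNReal.ofReal (Ffn b (m+2) τ)
      ≤ ∫⁻ t, ENNReal.ofReal (Gfn b (m+1) (τ - t)) ∂ν := by
  have hν1 : ν (Set.Ioi 0) = 1 := by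
    have := prob_compl_eq_one_sub (μ := ν) (measurableSet_Iic (a := (0:ℝ)))
    rwa [hν0, tsub_zero, Set.compl_Iic] at this
  have hint_nonneg : ∀ t : ℝ, 0 ≤ ∫ s in Set.Ioc 0 (min t τ), psi b τ m s := by
    intro t
    apply setIntegral_nonneg measurableSet_Ioc
    intro s hs
    exact psi_nonneg hb m (hs.2.trans (min_le_right _ _))
  have hG : ∀ t : ℝ, 0 < t →
      Gfn b (m+1) (τ - t) = Ffn b (m+1) τ + ∫ s in Set.Ioc 0 (min t τ), psi b τ m s := by
    intro t ht
    rcases le_or_gt t τ with h | h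
    · rw [min_eq_left h, ftc1 b τ m t ht.le h]
      have hmax : max (τ - t) 0 = τ - t := max_eq_left (by linarith)
      simp only [Gfn, hmax]
      ring
    · rw [min_eq_right h.le, ftc1 b τ m τ hτ.le le_rfl]
      have hmax : max (τ - t) 0 = 0 := max_eq_right (by linarith)
      simp only [Gfn, hmax, sub_self]
      ring
  set F : ℝ × ℝ → ENNReal :=
    fun p => Set.indicator {q : ℝ × ℝ | 0 < q.2 ∧ q.2 ≤ min q.1 τ}
      (fun q => ENNReal.ofReal (psi b τ m q.2)) p with hF
  have hFmeas : Measurable F := by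
    apply Measurable.indicator
    · exact ENNReal.measurable_ofReal.comp ((psi_cont b τ m).measurable.comp measurable_snd)
    · exact MeasurableSet.inter
        (measurableSet_lt measurable_const measurable_snd)
        (measurableSet_le measurable_snd ((measurable_fst.min measurable_const)))
  have hFt : ∀ t : ℝ, (∫⁻ s, F (t, s)) = ∫⁻ s in Set.Ioc 0 (min t τ), ENNReal.ofReal (psi b τ m s) := by
    intro t
    have heq : (fun s => F (t, s))
        = (Set.Ioc 0 (min t τ)).indicator (fun s => ENNReal.ofReal (psi b τ m s)) := by
      funext s
      simp [hF, Set.indicator_apply, Set.mem_Ioc, Set.mem_setOf_eq]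
    rw [heq, lintegral_indicator measurableSet_Ioc]
  have hofint : ∀ t : ℝ, ENNReal.ofReal (∫ s in Set.Ioc 0 (min t τ), psi b τ m s)
      = ∫⁻ s in Set.Ioc 0 (min t τ), ENNReal.ofReal (psi b τ m s) := by
    intro t
    apply ofReal_integral_eq_lintegral_ofReal
    · exact (psi_cont b τ m).integrableOn_Ioc
    · refine (ae_restrict_iff' measurableSet_Ioc).2 (ae_of_all _ fun s hs => ?_)
      exact psi_nonneg hb m (hs.2.trans (min_le_right _ _))
  calc ENNReal.ofReal (Ffn b (m+2) τ)
      = ENNReal.ofReal (Ffn b (m+1) τ)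
        + ENNReal.ofReal (Real.exp (-(b*τ)) * (b*τ)^(m+1) / (Nat.factorial (m+1))) := by
        rw [← ENNReal.ofReal_add (Ffn_nonneg hb _ hτ.le) (by positivity)]
        congr 1
        simp only [Ffn, Finset.sum_range_succ]
        ring
    _ ≤ ENNReal.ofReal (Ffn b (m+1) τ)
        + ∫⁻ s in Set.Ioc 0 τ, ENNReal.ofReal (psi b τ m s) * ν (Set.Ici s) := by
        gcongr
        rw [← ftc2 b τ m hτ.le,
          ofReal_integral_eq_lintegral_ofReal
            (((psi_cont b τ m).fun_mul (by continuity)).integrableOn_Ioc)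
            ((ae_restrict_iff' measurableSet_Ioc).2 (ae_of_all _ fun s hs => by
              have := psi_nonneg hb m (hs.2 : s ≤ τ)
              positivity))]
        apply setLIntegral_mono
          (((ENNReal.measurable_ofReal.comp (psi_cont b τ m).measurable)).mul
            (Antitone.measurable (fun x y hxy => measure_mono (Set.Ici_subset_Ici.2 hxy))))
        intro s hs
        rw [ENNReal.ofReal_mul (psi_nonneg hb m hs.2)]
        exact mul_le_mul' le_rfl ((hνtail s hs.1).trans (measure_mono Set.Ioi_subset_Ici_self))
    _ = ENNReal.ofReal (Ffn b (m+1) τ) + ∫⁻ s, (∫⁻ t in Set.Ioi 0, F (t, s) ∂ν) := by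
        congr 1
        rw [← lintegral_indicator measurableSet_Ioc]
        apply lintegral_congr
        intro s
        by_cases hs : 0 < s ∧ s ≤ τ
        · have hset : (fun t => F (t, s)) = fun t => (Set.Ici s).indicator
              (fun _ => ENNReal.ofReal (psi b τ m s)) t := by
            funext t
            simp only [hF, Set.indicator_apply, Set.mem_Ici, Set.mem_setOf_eq, le_min_iff]
            by_cases h : s ≤ t <;> simp [h, hs.1, hs.2]
          rw [hset]
          rw [lintegral_indicator measurableSet_Ici]
          rw [Measure.restrict_restrict measurableSet_Ici, setLIntegral_const]
          have : Set.Ici s ∩ Set.Ioi 0 = Set.Ici s :=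
            Set.inter_eq_left.2 (fun x hx => lt_of_lt_of_le hs.1 hx)
          rw [this]
          simp [Set.indicator_apply, Set.mem_Ioc, hs.1, hs.2]
        · have h0 : ∀ t, F (t, s) = 0 := by
            intro t
            simp only [hF, Set.indicator_apply, Set.mem_setOf_eq, le_min_iff]
            rw [if_neg]
            rintro ⟨h1, _, h3⟩
            exact hs ⟨h1, h3⟩
          simp only [h0, lintegral_zero, lintegral_const, Set.indicator_apply, Set.mem_Ioc]
          rw [if_neg (by exact fun h => hs ⟨h.1, h.2⟩)]
    _ = ENNReal.ofReal (Ffn b (m+1) τ) + ∫⁻ t in Set.Ioi 0, (∫⁻ s, F (t, s)) ∂ν := by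
        congr 1
        exact lintegral_lintegral_swap
          (μ := (volume : Measure ℝ)) (ν := ν.restrict (Set.Ioi 0))
          (f := fun s t => F (t, s))
          ((hFmeas.comp measurable_swap).aemeasurable)
    _ = ∫⁻ t in Set.Ioi 0, (ENNReal.ofReal (Ffn b (m+1) τ) + (∫⁻ s, F (t, s))) ∂ν := by
        rw [lintegral_add_left measurable_const, setLIntegral_const, hν1, mul_one]
    _ = ∫⁻ t in Set.Ioi 0, ENNReal.ofReal (Gfn b (m+1) (τ - t)) ∂ν := by
        apply setLIntegral_congr_fun measurableSet_Ioi
        intro t ht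
        dsimp only
        rw [hG t ht, ENNReal.ofReal_add (Ffn_nonneg hb _ hτ.le) (hint_nonneg t),
          hofint, hFt]
    _ ≤ ∫⁻ t, ENNReal.ofReal (Gfn b (m+1) (τ - t)) ∂ν := setLIntegral_le_lintegral _ _

/-- If `T̃_i` are i.i.d. nonnegative with `P(T̃_1 > τ) ≥ e^{-bτ}` for all
`τ > 0`, then for every `k ≥ 1` and `τ > 0`,
`P(T̃_1 + ⋯ + T̃_k > τ) ≥ e^{-bτ} Σ_{j=0}^{k-1} (bτ)^j/j!`. -/
theorem stmt_11
    {Ω : Type*} [MeasureSpace Ω] [IsProbabilityMeasure (ℙ : Measure Ω)]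
    (T : ℕ → Ω → ℝ) (b : ℝ) (hb : 0 < b)
    (hmeas : ∀ i, Measurable (T i))
    (hindep : iIndepFun T ℙ)
    (hident : ∀ i j, IdentDistrib (T i) (T j) ℙ ℙ)
    (hnonneg : ∀ i ω, 0 ≤ T i ω)
    (htail : ∀ τ > 0, (ℙ {ω | τ < T 1 ω}).toReal ≥ Real.exp (-b * τ)) :
    ∀ k : ℕ, 1 ≤ k → ∀ τ > 0,
      (ℙ {ω | τ < ∑ i ∈ Finset.range k, T (i + 1) ω}).toReal
        ≥ Real.exp (-b * τ) * ∑ j ∈ Finset.range k, (b * τ) ^ j / (Nat.factorial j) := by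
  -- tail bound in ENNReal form
  have htail' : ∀ τ : ℝ, 0 < τ → ENNReal.ofReal (Real.exp (-(b*τ))) ≤ ℙ {ω | τ < T 1 ω} := by
    intro τ hτ
    apply ENNReal.ofReal_le_of_le_toReal
    rw [← neg_mul]
    exact htail τ hτ
  -- T 1 is a.s. positive
  have hpos : ℙ {ω | 0 < T 1 ω} = 1 := by
    refine le_antisymm prob_le_one ?_
    have hmono : ∀ n : ℕ, ENNReal.ofReal (Real.exp (-(b * (1/(n+1))))) ≤ ℙ {ω | 0 < T 1 ω} := by
      intro n
      have hn : (0:ℝ) < 1/(n+1) := by positivity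
      refine le_trans (htail' (1/(n+1)) hn) (measure_mono ?_)
      intro ω hω
      exact lt_trans hn hω
    have hlim : Filter.Tendsto (fun n : ℕ => ENNReal.ofReal (Real.exp (-(b * (1/(n+1))))))
        Filter.atTop (nhds 1) := by
      have h1 : Filter.Tendsto (fun n : ℕ => (1:ℝ)/(n+1)) Filter.atTop (nhds 0) :=
        tendsto_one_div_add_atTop_nhds_zero_nat
      have h1' : Filter.Tendsto (fun n : ℕ => -(b * (1/(n+1)))) Filter.atTop (nhds 0) := by
        simpa using (h1.const_mul b).neg
      have h2 : Filter.Tendsto (fun n : ℕ => Real.exp (-(b * (1/(n+1))))) Filter.atTop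
          (nhds 1) := by
        simpa [Function.comp_def] using (Real.continuous_exp.tendsto 0).comp h1'
      simpa [Function.comp_def] using (ENNReal.continuous_ofReal.tendsto 1).comp h2
    exact le_of_tendsto' hlim hmono
  have hneg : ℙ {ω | T 1 ω ≤ 0} = 0 := by
    have hc : {ω | T 1 ω ≤ 0} = {ω | 0 < T 1 ω}ᶜ := by
      ext ω; simp [not_lt]
    rw [hc, prob_compl_eq_one_sub (measurableSet_lt measurable_const (hmeas 1)), hpos]
    simp
  -- the common distribution
  set ν : Measure ℝ := Measure.map (T 1) ℙ with hν
  have : IsProbabilityMeasure ν := Measure.isProbabilityMeasure_map (hmeas 1).aemeasurable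
  have hν0 : ν (Set.Iic 0) = 0 := by
    rw [hν, Measure.map_apply (hmeas 1) measurableSet_Iic]
    exact hneg
  have hνtail : ∀ s : ℝ, 0 < s → ENNReal.ofReal (Real.exp (-(b*s))) ≤ ν (Set.Ioi s) := by
    intro s hs
    rw [hν, Measure.map_apply (hmeas 1) measurableSet_Ioi]
    exact htail' s hs
  -- main induction
  have main : ∀ n : ℕ, ∀ τ : ℝ,
      ENNReal.ofReal (Gfn b (n+1) τ) ≤ ℙ {ω | τ < ∑ i ∈ Finset.range (n+1), T (i + 1) ω} := by
    intro n
    induction n with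
    | zero =>
      intro τ
      rcases le_or_gt τ 0 with hτ | hτ
      · have hGval : Gfn b 1 τ = 1 := by
          rw [Gfn, max_eq_right hτ, Ffn_zero]
        rw [hGval]
        calc (ENNReal.ofReal 1) = ℙ {ω | 0 < T 1 ω} := by rw [hpos]; simp
          _ ≤ ℙ {ω | τ < ∑ i ∈ Finset.range 1, T (i + 1) ω} := by
              apply measure_mono
              intro ω hω
              simp only [Finset.sum_range_one, Set.mem_setOf_eq]
              exact lt_of_le_of_lt hτ hω
      · have hGval : Gfn b 1 τ = Real.exp (-(b*τ)) := by
          rw [Gfn, max_eq_left hτ.le, Ffn]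
          simp
        rw [hGval]
        refine le_trans (htail' τ hτ) (le_of_eq ?_)
        congr 1
        ext ω
        simp [Finset.sum_range_one]
    | succ n ih =>
      intro τ
      rcases le_or_gt τ 0 with hτ | hτ
      · have hGval : Gfn b (n+2) τ = 1 := by
          rw [Gfn, max_eq_right hτ, Ffn_zero]
        rw [hGval]
        calc (ENNReal.ofReal 1) = ℙ {ω | 0 < T 1 ω} := by rw [hpos]; simp
          _ ≤ ℙ {ω | τ < ∑ i ∈ Finset.range (n+2), T (i + 1) ω} := by
              apply measure_mono
              intro ω hω
              simp only [Set.mem_setOf_eq] at hω ⊢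
              have hle : T 1 ω ≤ ∑ i ∈ Finset.range (n+2), T (i + 1) ω := by
                have h0 : (0:ℕ) ∈ Finset.range (n+2) := by simp
                have := Finset.single_le_sum (f := fun i => T (i+1) ω)
                  (fun i _ => hnonneg (i+1) ω) h0
                simpa using this
              calc τ ≤ 0 := hτ
                _ < T 1 ω := hω
                _ ≤ _ := hle
      · -- main step
        set X : Ω → ℝ := fun ω => ∑ i ∈ Finset.range (n+1), T (i + 1) ω with hX
        set Y : Ω → ℝ := T (n+2) with hY
        have hXmeas : Measurable X := by
          apply Finset.measurable_sum
          intro i _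
          exact hmeas (i+1)
        have hindepXY : IndepFun X Y ℙ := by
          have hnot : (n+2) ∉ (Finset.range (n+1)).image (· + 1) := by
            simp only [Finset.mem_image, Finset.mem_range]
            rintro ⟨i, hi, hieq⟩
            omega
          have h := hindep.indepFun_finsetSum_of_notMem hmeas hnot
          have hsum : (∑ j ∈ (Finset.range (n+1)).image (· + 1), T j) = X := by
            funext ω
            rw [Finset.sum_apply]
            rw [Finset.sum_image (by intro a _ b _ h; simp only at h; omega)]
          rwa [hsum] at h
        have hYmeas : Measurable Y := hmeas (n+2)
        have hprod : Measure.map (fun ω => (Y ω, X ω)) ℙ = (Measure.map Y ℙ).prod (Measure.map X ℙ) :=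
          (indepFun_iff_map_prod_eq_prod_map_map hYmeas.aemeasurable
            hXmeas.aemeasurable).mp hindepXY.symm
        have hsetS : MeasurableSet {p : ℝ × ℝ | τ < p.1 + p.2} :=
          measurableSet_lt measurable_const (measurable_fst.add measurable_snd)
        have hdecomp : ℙ {ω | τ < ∑ i ∈ Finset.range (n+2), T (i + 1) ω}
            = ∫⁻ t, (Measure.map X ℙ) (Set.Ioi (τ - t)) ∂(Measure.map Y ℙ) := by
          have hseteq : {ω | τ < ∑ i ∈ Finset.range (n+2), T (i + 1) ω}
              = (fun ω => (Y ω, X ω)) ⁻¹' {p : ℝ × ℝ | τ < p.1 + p.2} := by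
            have hsum2 : ∀ ω, (∑ i ∈ Finset.range (n+2), T (i + 1) ω) = Y ω + X ω := by
              intro ω
              rw [Finset.sum_range_succ, add_comm]
            ext ω
            simp only [Set.mem_setOf_eq, Set.mem_preimage, hsum2 ω]
          rw [hseteq, ← Measure.map_apply (hYmeas.prodMk hXmeas) hsetS, hprod,
            Measure.prod_apply hsetS]
          congr 1
          funext t
          congr 1
          ext x
          simp only [Set.mem_preimage, Set.mem_setOf_eq, Set.mem_Ioi]
          constructor <;> intro h <;> linarith
        have hmapY : Measure.map Y ℙ = ν := (hident (n+2) 1).map_eq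
        have hIH : ∀ t : ℝ, ENNReal.ofReal (Gfn b (n+1) (τ - t)) ≤ (Measure.map X ℙ) (Set.Ioi (τ - t)) := by
          intro t
          rw [Measure.map_apply hXmeas measurableSet_Ioi]
          exact ih (τ - t)
        have hGval : Gfn b (n+2) τ = Ffn b (n+2) τ := by
          rw [Gfn, max_eq_left hτ.le]
        rw [hGval, hdecomp, hmapY]
        calc ENNReal.ofReal (Ffn b (n+2) τ)
            ≤ ∫⁻ t, ENNReal.ofReal (Gfn b (n+1) (τ - t)) ∂ν := core hb ν hν0 hνtail n τ hτ
          _ ≤ ∫⁻ t, (Measure.map X ℙ) (Set.Ioi (τ - t)) ∂ν := lintegral_mono fun t => hIH t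
  -- conclude
  intro k hk τ hτ
  obtain ⟨n, rfl⟩ : ∃ n, k = n + 1 := ⟨k - 1, by omega⟩
  have h := main n τ
  have hGval : Gfn b (n+1) τ
      = Real.exp (-b * τ) * ∑ j ∈ Finset.range (n+1), (b * τ) ^ j / (Nat.factorial j) := by
    rw [Gfn, max_eq_left hτ.le, Ffn, neg_mul]
  rw [hGval] at h
  have hrhs : 0 ≤ Real.exp (-b * τ) * ∑ j ∈ Finset.range (n+1), (b * τ) ^ j / (Nat.factorial j) := by
    have : (0:ℝ) ≤ ∑ j ∈ Finset.range (n+1), (b * τ) ^ j / (Nat.factorial j) := by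
      apply Finset.sum_nonneg
      intro j _
      have : (0:ℝ) ≤ (b*τ)^j := pow_nonneg (by positivity) j
      positivity
    positivity
  have := ENNReal.toReal_mono (measure_ne_top ℙ _) h
  rwa [ENNReal.toReal_ofReal hrhs] at this
end

section
/- Let (T̃_i)_{i≥1} be i.i.d. nonnegative random variables with P(T̃_1 > τ) ≤ e^{-bτ} for all τ > 0 and some b > 0, let ν be independent of (T̃_i) with geometric distribution P(ν = k) = 2^{-k} for k = 1, 2, ..., and let T_a = Σ_{i=1}^{ν} T̃_i. Then P(T_a > τ) ≤ e^{-bτ/2} for all τ > 0. -/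
open MeasureTheory ProbabilityTheory Set

noncomputable def gtail (b : ℝ) (k : ℕ) (τ : ℝ) : ℝ :=
  Real.exp (-b * τ) * ∑ j ∈ Finset.range k, (b * τ) ^ j / j.factorial

lemma gtail_nonneg {b τ : ℝ} (hb : 0 ≤ b) (hτ : 0 ≤ τ) (k : ℕ) : 0 ≤ gtail b k τ := by
  unfold gtail
  refine mul_nonneg (Real.exp_pos _).le (Finset.sum_nonneg fun j _ => ?_)
  exact div_nonneg (pow_nonneg (mul_nonneg hb hτ) j) (by positivity)

lemma gtail_le_one {b τ : ℝ} (hb : 0 ≤ b) (hτ : 0 ≤ τ) (k : ℕ) : gtail b k τ ≤ 1 := by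
  have h := Real.sum_le_exp_of_nonneg (mul_nonneg hb hτ) k
  unfold gtail
  rw [neg_mul, Real.exp_neg, inv_mul_le_iff₀ (Real.exp_pos _), mul_one]
  exact h

lemma gtail_continuous (b : ℝ) (k : ℕ) : Continuous (gtail b k) := by
  unfold gtail; fun_prop

noncomputable def phi (b : ℝ) (k : ℕ) (τ : ℝ) (t : ℝ) : ℝ :=
  if 1 ≤ t then 0 else if t ≤ Real.exp (-b * τ) then 1 else gtail b k (τ + Real.log t / b)

lemma phi_measurable (b : ℝ) (k : ℕ) (τ : ℝ) : Measurable (phi b k τ) := by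
  unfold phi
  refine Measurable.ite (measurableSet_le measurable_const measurable_id) measurable_const ?_
  refine Measurable.ite (measurableSet_le measurable_id measurable_const) measurable_const ?_
  exact (gtail_continuous b k).measurable.comp
    (measurable_const.add (Real.measurable_log.div_const b))

lemma phi_mem_Icc {b : ℝ} (hb : 0 < b) (k : ℕ) {τ : ℝ} (hτ : 0 < τ) {t : ℝ} (ht : 0 < t) :
    phi b k τ t ∈ Set.Icc (0:ℝ) 1 := by
  unfold phi
  split
  · exact ⟨le_refl 0, zero_le_one⟩
  · split
    · exact ⟨zero_le_one, le_refl 1⟩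
    · rename_i h1 h2
      push_neg at h1 h2
      have ha : 0 < τ + Real.log t / b := by
        have hlt : -b * τ < Real.log t := by
          have := (Real.lt_log_iff_exp_lt ht).mpr h2
          exact this
        have : -τ < Real.log t / b := by
          rw [lt_div_iff₀ hb]; nlinarith
        linarith
      exact ⟨gtail_nonneg hb.le ha.le k, gtail_le_one hb.le ha.le k⟩

lemma phi_int1 {b : ℝ} (hb : 0 < b) (k : ℕ) {τ : ℝ} (hτ : 0 < τ) :
    IntegrableOn (phi b k τ) (Ioc 0 1) := by
  refine Measure.integrableOn_of_bounded (M := 1) (by simp)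
    (phi_measurable b k τ).aestronglyMeasurable ?_
  refine (ae_restrict_iff' measurableSet_Ioc).mpr (Filter.Eventually.of_forall fun t ht => ?_)
  have h := phi_mem_Icc hb k hτ ht.1
  rw [Real.norm_eq_abs, abs_le]
  exact ⟨by linarith [h.1], h.2⟩

lemma phi_int2 (b : ℝ) (k : ℕ) (τ : ℝ) : IntegrableOn (phi b k τ) (Ioi 1) := by
  have h : EqOn (phi b k τ) (fun _ => 0) (Ioi 1) := by
    intro t ht; unfold phi; rw [if_pos (le_of_lt ht)]
  exact (integrableOn_congr_fun h measurableSet_Ioi).mpr (integrableOn_zero)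

lemma phi_integrableOn {b : ℝ} (hb : 0 < b) (k : ℕ) {τ : ℝ} (hτ : 0 < τ) :
    IntegrableOn (phi b k τ) (Ioi 0) := by
  have h := (phi_int1 hb k hτ).union (phi_int2 b k τ)
  rwa [Set.Ioc_union_Ioi_eq_Ioi zero_le_one] at h

lemma phi_integral {b : ℝ} (hb : 0 < b) (k : ℕ) {τ : ℝ} (hτ : 0 < τ) :
    ∫ t in Ioi 0, phi b k τ t = gtail b (k + 1) τ := by
  set c := Real.exp (-b * τ) with hcdef
  have hc0 : 0 < c := Real.exp_pos _
  have hc1 : c < 1 := by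
    rw [hcdef, ← Real.exp_zero]; exact Real.exp_lt_exp.mpr (by nlinarith)
  -- reduce to Ioc 0 1
  have hsplit : ∫ t in Ioi 0, phi b k τ t = ∫ t in Ioc 0 1, phi b k τ t := by
    rw [← Set.Ioc_union_Ioi_eq_Ioi (zero_le_one (α := ℝ)),
      setIntegral_union Set.Ioc_disjoint_Ioi_same measurableSet_Ioi
        (phi_int1 hb k hτ) (phi_int2 b k τ)]
    have : ∫ t in Ioi (1:ℝ), phi b k τ t = 0 := by
      rw [setIntegral_congr_fun measurableSet_Ioi
        (fun t ht => by unfold phi; rw [if_pos (le_of_lt ht)] : EqOn (phi b k τ) (fun _ => 0) (Ioi 1))]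
      simp
    rw [this, add_zero]
  rw [hsplit, ← intervalIntegral.integral_of_le (zero_le_one (α := ℝ))]
  have hii1 : IntervalIntegrable (phi b k τ) volume 0 c := by
    rw [intervalIntegrable_iff_integrableOn_Ioc_of_le hc0.le]
    exact (phi_int1 hb k hτ).mono_set (Set.Ioc_subset_Ioc le_rfl hc1.le)
  have hii2 : IntervalIntegrable (phi b k τ) volume c 1 := by
    rw [intervalIntegrable_iff_integrableOn_Ioc_of_le hc1.le]
    exact (phi_int1 hb k hτ).mono_set (Set.Ioc_subset_Ioc hc0.le le_rfl)
  rw [← intervalIntegral.integral_add_adjacent_intervals hii1 hii2]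
  -- first piece = c
  have hfirst : ∫ t in (0:ℝ)..c, phi b k τ t = c := by
    have heq : EqOn (phi b k τ) (fun _ => (1:ℝ)) (Set.uIcc 0 c) := by
      intro t ht
      rw [Set.uIcc_of_le hc0.le] at ht
      unfold phi
      rw [if_neg (by push_neg; linarith [ht.2]), if_pos ht.2]
    rw [intervalIntegral.integral_congr heq, intervalIntegral.integral_const]
    simp
  -- second piece via FTC
  set ψ : ℝ → ℝ := fun t =>
    Real.exp (-b * τ) * ((∑ j ∈ Finset.range k, (b * τ + Real.log t) ^ j / j.factorial) * t⁻¹)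
    with hψdef
  set H : ℝ → ℝ := fun t =>
    Real.exp (-b * τ) * ∑ j ∈ Finset.range k, (b * τ + Real.log t) ^ (j + 1) / (j + 1).factorial
    with hHdef
  have hne : ∀ t ∈ Set.uIcc c 1, t ≠ 0 := by
    intro t ht
    rw [Set.uIcc_of_le hc1.le] at ht
    exact ne_of_gt (lt_of_lt_of_le hc0 ht.1)
  have hψcont : ContinuousOn ψ (Set.uIcc c 1) := by
    refine continuousOn_const.mul (ContinuousOn.mul ?_ (continuousOn_inv₀.mono ?_))
    · refine continuousOn_finset_sum _ fun j _ => ContinuousOn.div_const ?_ _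
      exact (continuousOn_const.add (Real.continuousOn_log.mono fun t ht => hne t ht)).pow _
    · intro t ht; exact hne t ht
  have hderiv : ∀ t ∈ Set.uIcc c 1, HasDerivAt H (ψ t) t := by
    intro t ht
    have ht0 : 0 < t := by
      rw [Set.uIcc_of_le hc1.le] at ht
      exact lt_of_lt_of_le hc0 ht.1
    have hterm : ∀ j ∈ Finset.range k,
        HasDerivAt (fun t => (b * τ + Real.log t) ^ (j + 1) / ((j + 1).factorial : ℝ))
          ((b * τ + Real.log t) ^ j / j.factorial * t⁻¹) t := by
      intro j _
      have hlog : HasDerivAt (fun t => b * τ + Real.log t) t⁻¹ t :=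
        (Real.hasDerivAt_log (ne_of_gt ht0)).const_add (b * τ)
      have hpow := (hlog.pow (j + 1)).div_const ((j + 1).factorial : ℝ)
      refine hpow.congr_deriv ?_
      rw [Nat.add_sub_cancel, Nat.factorial_succ]
      push_cast
      field_simp
    have hsum := (HasDerivAt.sum hterm).const_mul (Real.exp (-b * τ))
    simp only [Finset.sum_apply] at hsum
    refine hsum.congr_deriv ?_
    rw [hψdef]
    simp only []
    rw [Finset.sum_mul]
  have hsecond : ∫ t in c..1, phi b k τ t = H 1 - H c := by
    have hcongr : ∫ t in c..1, phi b k τ t = ∫ t in c..1, ψ t := by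
      refine intervalIntegral.integral_congr_ae ?_
      have h1 : (volume : Measure ℝ) {t | ¬ t ≠ 1} = 0 := by
        have : {t : ℝ | ¬ t ≠ 1} = {1} := by ext t; simp
        rw [this]; exact measure_singleton 1
      filter_upwards [ae_iff.mpr h1] with t ht1 htmem
      rw [Set.uIoc_of_le hc1.le] at htmem
      have ht0 : 0 < t := lt_trans hc0 htmem.1
      have htlt1 : t < 1 := lt_of_le_of_ne htmem.2 ht1
      unfold phi
      rw [if_neg (by push_neg; exact htlt1), if_neg (by push_neg; exact htmem.1), hψdef]
      unfold gtail
      have harg : b * (τ + Real.log t / b) = b * τ + Real.log t := by field_simp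
      rw [harg]
      have hexp : Real.exp (-(b * τ + Real.log t)) = Real.exp (-b * τ) * t⁻¹ := by
        rw [neg_add, Real.exp_add, Real.exp_neg (Real.log t), Real.exp_log ht0, neg_mul]
      rw [show -b * (τ + Real.log t / b) = -(b * τ + Real.log t) by rw [← harg]; ring, hexp]
      ring
    rw [hcongr]
    exact intervalIntegral.integral_eq_sub_of_hasDerivAt hderiv (hψcont.intervalIntegrable)
  rw [hfirst, hsecond]
  -- evaluate H 1 and H c
  have hH1 : H 1 = Real.exp (-b * τ) * ∑ j ∈ Finset.range k, (b * τ) ^ (j + 1) / (j + 1).factorial := by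
    rw [hHdef]; simp [Real.log_one]
  have hHc : H c = 0 := by
    rw [hHdef]
    simp only [hcdef, Real.log_exp]
    have : ∀ j ∈ Finset.range k, (b * τ + -b * τ) ^ (j + 1) / ((j + 1).factorial : ℝ) = 0 := by
      intro j _
      rw [show b * τ + -b * τ = 0 by ring, zero_pow (Nat.succ_ne_zero j), zero_div]
    rw [Finset.sum_congr rfl this]
    simp
  rw [hH1, hHc, sub_zero]
  unfold gtail
  rw [Finset.sum_range_succ', hcdef]
  simp only [Nat.factorial_zero, Nat.cast_one, pow_zero]
  push_cast
  ring

lemma conv_step {Ω : Type*} [MeasureSpace Ω] [IsProbabilityMeasure (ℙ : Measure Ω)]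
    {X Y : Ω → ℝ} (hX : Measurable X) (hY : Measurable Y) (hXY : IndepFun X Y ℙ)
    {b : ℝ} (hb : 0 < b) (k : ℕ)
    (hXt : ∀ τ > 0, (ℙ {ω | τ < X ω}).toReal ≤ gtail b k τ)
    (hYt : ∀ τ > 0, (ℙ {ω | τ < Y ω}).toReal ≤ Real.exp (-b * τ)) :
    ∀ τ > 0, (ℙ {ω | τ < X ω + Y ω}).toReal ≤ gtail b (k + 1) τ := by
  intro τ hτ
  set μ := Measure.map X ℙ with hμdef
  set ν := Measure.map Y ℙ with hνdef
  have hμP : IsProbabilityMeasure μ := Measure.isProbabilityMeasure_map hX.aemeasurable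
  have hνP : IsProbabilityMeasure ν := Measure.isProbabilityMeasure_map hY.aemeasurable
  have hμtail : ∀ a : ℝ, 0 < a → μ (Ioi a) ≤ ENNReal.ofReal (gtail b k a) := by
    intro a ha
    rw [hμdef, Measure.map_apply hX measurableSet_Ioi]
    rw [ENNReal.le_ofReal_iff_toReal_le (measure_ne_top _ _) (gtail_nonneg hb.le ha.le k)]
    exact hXt a ha
  have hνtail : ∀ a : ℝ, 0 < a → ν (Ioi a) ≤ ENNReal.ofReal (Real.exp (-b * a)) := by
    intro a ha
    rw [hνdef, Measure.map_apply hY measurableSet_Ioi]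
    rw [ENNReal.le_ofReal_iff_toReal_le (measure_ne_top _ _) (Real.exp_pos _).le]
    exact hYt a ha
  set h : ℝ → ℝ := fun x => min 1 (Real.exp (-b * (τ - x))) with hdef
  have key : ℙ {ω | τ < X ω + Y ω} ≤ ENNReal.ofReal (gtail b (k + 1) τ) := by
    have hset : MeasurableSet {p : ℝ × ℝ | τ < p.1 + p.2} :=
      measurableSet_lt measurable_const (measurable_fst.add measurable_snd)
    have hmap : ℙ {ω | τ < X ω + Y ω} = (μ.prod ν) {p : ℝ × ℝ | τ < p.1 + p.2} := by
      rw [← (indepFun_iff_map_prod_eq_prod_map_map hX.aemeasurable hY.aemeasurable).mp hXY,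
        Measure.map_apply (hX.prodMk hY) hset]
      rfl
    rw [hmap, Measure.prod_apply hset]
    have step1 : ∀ x : ℝ, ν (Prod.mk x ⁻¹' {p : ℝ × ℝ | τ < p.1 + p.2})
        ≤ ENNReal.ofReal (h x) := by
      intro x
      have hpre : Prod.mk x ⁻¹' {p : ℝ × ℝ | τ < p.1 + p.2} = Ioi (τ - x) := by
        ext y; simp [Set.mem_Ioi, sub_lt_iff_lt_add']
      rw [hpre]
      rcases le_or_gt (τ - x) 0 with hc | hc
      · have h1 : (1:ℝ) ≤ Real.exp (-b * (τ - x)) := by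
          rw [← Real.exp_zero]; exact Real.exp_le_exp.mpr (by nlinarith)
        rw [hdef]; simp only [min_eq_left h1]
        simpa using prob_le_one
      · have h2 : Real.exp (-b * (τ - x)) ≤ 1 := by
          rw [← Real.exp_zero]; exact Real.exp_le_exp.mpr (by nlinarith)
        rw [hdef]; simp only [min_eq_right h2]
        exact hνtail _ hc
    have hcont : Continuous h := by
      rw [hdef]; fun_prop
    calc ∫⁻ x, ν (Prod.mk x ⁻¹' {p : ℝ × ℝ | τ < p.1 + p.2}) ∂μ
        ≤ ∫⁻ x, ENNReal.ofReal (h x) ∂μ := lintegral_mono step1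
      _ = ∫⁻ t in Ioi 0, μ {x | t < h x} := by
          refine lintegral_eq_lintegral_meas_lt μ ?_ hcont.measurable.aemeasurable
          refine Filter.Eventually.of_forall fun x => ?_
          exact le_min zero_le_one (Real.exp_pos _).le
      _ ≤ ∫⁻ t in Ioi 0, ENNReal.ofReal (phi b k τ t) := by
          refine setLIntegral_mono (ENNReal.measurable_ofReal.comp (phi_measurable b k τ)) ?_
          intro t ht
          by_cases h1 : 1 ≤ t
          · have hempty : {x | t < h x} = ∅ := by
              ext x
              simp only [Set.mem_setOf_eq, Set.mem_empty_iff_false, iff_false, not_lt, hdef]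
              exact le_trans (min_le_left _ _) h1
            rw [hempty]
            simp
          · by_cases h2 : t ≤ Real.exp (-b * τ)
            · have : phi b k τ t = 1 := by unfold phi; rw [if_neg h1, if_pos h2]
              rw [this]
              simpa using prob_le_one
            · push_neg at h1 h2
              set a := τ + Real.log t / b with hadef
              have hlt : -b * τ < Real.log t := (Real.lt_log_iff_exp_lt ht).mpr h2
              have ha : 0 < a := by
                rw [hadef]
                have : -τ < Real.log t / b := by rw [lt_div_iff₀ hb]; nlinarith
                linarith
              have hsub : {x | t < h x} ⊆ Ioi a := by
                intro x hx
                simp only [Set.mem_setOf_eq, hdef] at hx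
                have hx' : t < Real.exp (-b * (τ - x)) := lt_of_lt_of_le hx (min_le_right _ _)
                have hlog : Real.log t < -b * (τ - x) := (Real.log_lt_iff_lt_exp ht).mpr hx'
                have : Real.log t / b < x - τ := by
                  rw [div_lt_iff₀ hb]; nlinarith
                simp only [Set.mem_Ioi, hadef]; linarith
              have hphi : phi b k τ t = gtail b k a := by
                unfold phi; rw [if_neg (not_le.mpr h1), if_neg (not_le.mpr h2)]
              rw [hphi]
              exact le_trans (measure_mono hsub) (hμtail a ha)
      _ = ENNReal.ofReal (∫ t in Ioi 0, phi b k τ t) := by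
          rw [ofReal_integral_eq_lintegral_ofReal]
          · exact phi_integrableOn hb k hτ
          · refine (ae_restrict_iff' measurableSet_Ioi).mpr
              (Filter.Eventually.of_forall fun t ht => (phi_mem_Icc hb k hτ ht).1)
      _ = ENNReal.ofReal (gtail b (k + 1) τ) := by
          rw [phi_integral hb k hτ]
  calc (ℙ {ω | τ < X ω + Y ω}).toReal
      ≤ (ENNReal.ofReal (gtail b (k + 1) τ)).toReal := by
        exact ENNReal.toReal_mono ENNReal.ofReal_ne_top key
    _ = gtail b (k + 1) τ := ENNReal.toReal_ofReal (gtail_nonneg hb.le hτ.le (k+1))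

lemma sum_tail {Ω : Type*} [MeasureSpace Ω] [IsProbabilityMeasure (ℙ : Measure Ω)]
    (T : ℕ → Ω → ℝ) {b : ℝ} (hb : 0 < b)
    (hmeas : ∀ i, Measurable (T i))
    (hindep : iIndepFun T ℙ)
    (hident : ∀ i j, IdentDistrib (T i) (T j) ℙ ℙ)
    (htail : ∀ τ > 0, (ℙ {ω | τ < T 1 ω}).toReal ≤ Real.exp (-b * τ)) :
    ∀ k : ℕ, ∀ τ > 0,
      (ℙ {ω | τ < ∑ i ∈ Finset.range k, T (i + 1) ω}).toReal ≤ gtail b k τ := by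
  intro k
  induction k with
  | zero =>
    intro τ hτ
    have hempty : {ω : Ω | τ < ∑ i ∈ Finset.range 0, T (i + 1) ω} = ∅ := by
      ext ω; simp; linarith
    rw [hempty]
    simp [gtail]
  | succ k ih =>
    have hXmeas : Measurable (fun ω => ∑ i ∈ Finset.range k, T (i + 1) ω) :=
      Finset.measurable_sum _ fun i _ => hmeas (i + 1)
    have hindXY : IndepFun (fun ω => ∑ i ∈ Finset.range k, T (i + 1) ω) (T (k + 1)) ℙ := by
      have hnm : k + 1 ∉ (Finset.range k).image (· + 1) := by
        simp only [Finset.mem_image, Finset.mem_range]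
        rintro ⟨a, ha, hae⟩; omega
      have h := hindep.indepFun_finsetSum_of_notMem hmeas hnm
      have heq : (∑ j ∈ (Finset.range k).image (· + 1), T j)
          = fun ω => ∑ i ∈ Finset.range k, T (i + 1) ω := by
        ext ω
        rw [Finset.sum_apply]
        rw [Finset.sum_image (fun a _ b _ hab => by omega)]
      rwa [heq] at h
    have hYtail : ∀ τ > 0, (ℙ {ω | τ < T (k + 1) ω}).toReal ≤ Real.exp (-b * τ) := by
      intro τ hτ
      have hid := (hident (k + 1) 1).measure_mem_eq (measurableSet_Ioi (a := τ))
      have hseteq : ∀ i : ℕ, T i ⁻¹' Ioi τ = {ω | τ < T i ω} := fun i => rfl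
      rw [hseteq, hseteq] at hid
      rw [hid]
      exact htail τ hτ
    have hconv := conv_step hXmeas (hmeas (k + 1)) hindXY hb k ih hYtail
    intro τ hτ
    have hseteq : {ω : Ω | τ < ∑ i ∈ Finset.range (k + 1), T (i + 1) ω}
        = {ω : Ω | τ < (fun ω => ∑ i ∈ Finset.range k, T (i + 1) ω) ω + T (k + 1) ω} := by
      ext ω; simp [Finset.sum_range_succ]
    rw [hseteq]
    exact hconv τ hτ

lemma geom_gtail_sum {b τ : ℝ} (hb : 0 < b) (hτ : 0 < τ) :
    ∑' k : ℕ, ENNReal.ofReal ((1 / 2 : ℝ) ^ k * gtail b k τ)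
      = ENNReal.ofReal (Real.exp (-b * τ / 2)) := by
  set d : ℕ → ℝ := fun j => Real.exp (-b * τ) * ((b * τ) ^ j / j.factorial) with hddef
  have hbτ : 0 ≤ b * τ := mul_nonneg hb.le hτ.le
  have hdnn : ∀ j, 0 ≤ d j := fun j =>
    mul_nonneg (Real.exp_pos _).le (div_nonneg (pow_nonneg hbτ j) (by positivity))
  have hstep1 : ∀ k : ℕ, ENNReal.ofReal ((1 / 2 : ℝ) ^ k * gtail b k τ)
      = ∑' j : ℕ, (if j < k then ENNReal.ofReal ((1 / 2 : ℝ) ^ k * d j) else 0) := by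
    intro k
    have h1 : (1 / 2 : ℝ) ^ k * gtail b k τ = ∑ j ∈ Finset.range k, (1 / 2 : ℝ) ^ k * d j := by
      unfold gtail
      rw [hddef, Finset.mul_sum]
      rw [Finset.mul_sum]
    rw [h1, ENNReal.ofReal_sum_of_nonneg fun j _ => mul_nonneg (by positivity) (hdnn j)]
    rw [tsum_eq_sum (s := Finset.range k)
      (fun j hj => if_neg (by simpa using hj))]
    exact (Finset.sum_congr rfl fun j hj => by rw [if_pos (Finset.mem_range.mp hj)]).symm
  have hsummable : ∀ j : ℕ, Summable fun k : ℕ =>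
      (if j < k then (1 / 2 : ℝ) ^ k * d j else 0) := by
    intro j
    refine Summable.of_nonneg_of_le (fun k => ?_) (fun k => ?_)
      (summable_geometric_two.mul_right (d j))
    · split
      · exact mul_nonneg (by positivity) (hdnn j)
      · exact le_refl 0
    · split
      · exact le_refl _
      · exact mul_nonneg (by positivity) (hdnn j)
  have hinner : ∀ j : ℕ, (∑' k : ℕ, (if j < k then ENNReal.ofReal ((1 / 2 : ℝ) ^ k * d j) else 0))
      = ENNReal.ofReal ((1 / 2 : ℝ) ^ j * d j) := by
    intro j
    have hofr : ∀ k : ℕ, (if j < k then ENNReal.ofReal ((1 / 2 : ℝ) ^ k * d j) else 0)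
        = ENNReal.ofReal (if j < k then (1 / 2 : ℝ) ^ k * d j else 0) := by
      intro k; split <;> simp
    rw [tsum_congr hofr, ← ENNReal.ofReal_tsum_of_nonneg (fun k => by
      split
      · exact mul_nonneg (by positivity) (hdnn j)
      · exact le_refl 0) (hsummable j)]
    congr 1
    rw [← (hsummable j).sum_add_tsum_nat_add
      (j + 1)]
    have hzero : ∑ i ∈ Finset.range (j + 1),
        (if j < i then (1 / 2 : ℝ) ^ i * d j else 0) = 0 := by
      refine Finset.sum_eq_zero fun i hi => if_neg ?_
      simp only [Finset.mem_range] at hi; omega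
    have htailsum : (∑' i : ℕ, (if j < i + (j + 1) then (1 / 2 : ℝ) ^ (i + (j + 1)) * d j else 0))
        = (1 / 2 : ℝ) ^ j * d j := by
      have hcongr : ∀ i : ℕ, (if j < i + (j + 1) then (1 / 2 : ℝ) ^ (i + (j + 1)) * d j else 0)
          = (1 / 2 : ℝ) ^ i * ((1 / 2 : ℝ) ^ (j + 1) * d j) := by
        intro i
        rw [if_pos (by omega), pow_add]
        ring
      rw [tsum_congr hcongr, tsum_mul_right, tsum_geometric_two]
      rw [pow_succ]
      ring
    rw [hzero, htailsum, zero_add]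
  calc ∑' k : ℕ, ENNReal.ofReal ((1 / 2 : ℝ) ^ k * gtail b k τ)
      = ∑' k : ℕ, ∑' j : ℕ, (if j < k then ENNReal.ofReal ((1 / 2 : ℝ) ^ k * d j) else 0) :=
        tsum_congr hstep1
    _ = ∑' j : ℕ, ∑' k : ℕ, (if j < k then ENNReal.ofReal ((1 / 2 : ℝ) ^ k * d j) else 0) :=
        ENNReal.tsum_comm
    _ = ∑' j : ℕ, ENNReal.ofReal ((1 / 2 : ℝ) ^ j * d j) := tsum_congr hinner
    _ = ENNReal.ofReal (Real.exp (-b * τ / 2)) := by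
        have hjrw : ∀ j : ℕ, (1 / 2 : ℝ) ^ j * d j
            = Real.exp (-b * τ) * ((b * τ / 2) ^ j / j.factorial) := by
          intro j
          rw [hddef]
          rw [show b * τ / 2 = (b * τ) * (1 / 2) by ring, mul_pow]
          ring
        have hsummable2 : Summable fun j : ℕ => (1 / 2 : ℝ) ^ j * d j := by
          refine Summable.congr ((Real.summable_pow_div_factorial (b * τ / 2)).mul_left
            (Real.exp (-b * τ))) fun j => (hjrw j).symm
        rw [← ENNReal.ofReal_tsum_of_nonneg (fun j => mul_nonneg (by positivity) (hdnn j))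
          hsummable2]
        congr 1
        rw [tsum_congr hjrw, tsum_mul_left]
        have hexp : (∑' j : ℕ, (b * τ / 2) ^ j / j.factorial) = Real.exp (b * τ / 2) := by
          rw [Real.exp_eq_exp_ℝ, NormedSpace.exp_eq_tsum_div]
        rw [hexp, ← Real.exp_add]
        congr 1
        ring


/-- If `T̃_i` are i.i.d. nonnegative with `P(T̃_1 > τ) ≤ e^{-bτ}` for all
`τ > 0` (`b > 0`), and `ν` is an independent geometric variable with `P(ν = k) = 2^{-k}`,
then the geometric compound `T_a = Σ_{i=1}^{ν} T̃_i` satisfies `P(T_a > τ) ≤ e^{-bτ/2}`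
for all `τ > 0`. -/
theorem stmt_12
    {Ω : Type*} [MeasureSpace Ω] [IsProbabilityMeasure (ℙ : Measure Ω)]
    (T : ℕ → Ω → ℝ) (ν : Ω → ℕ) (Ta : Ω → ℝ) (b : ℝ) (hb : 0 < b)
    (hmeas : ∀ i, Measurable (T i)) (hνmeas : Measurable ν)
    (hindep : iIndepFun T ℙ)
    (hident : ∀ i j, IdentDistrib (T i) (T j) ℙ ℙ)
    (hnonneg : ∀ i ω, 0 ≤ T i ω)
    (hνT : IndepFun ν (fun ω i => T i ω) ℙ)
    (hν : ∀ k : ℕ, 1 ≤ k → (ℙ {ω | ν ω = k}).toReal = (1 / 2 : ℝ) ^ k)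
    (hTa : ∀ ω, Ta ω = ∑ i ∈ Finset.range (ν ω), T (i + 1) ω)
    (htail : ∀ τ > 0, (ℙ {ω | τ < T 1 ω}).toReal ≤ Real.exp (-b * τ)) :
    ∀ τ > 0, (ℙ {ω | τ < Ta ω}).toReal ≤ Real.exp (-b * τ / 2) := by
  intro τ hτ
  set S : ℕ → Ω → ℝ := fun k ω => ∑ i ∈ Finset.range k, T (i + 1) ω with hSdef
  have hSmeas : ∀ k, Measurable (S k) := fun k =>
    Finset.measurable_sum _ fun i _ => hmeas (i + 1)
  have hStail := sum_tail T hb hmeas hindep hident htail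
  have hU : {ω | τ < Ta ω} = ⋃ k, ({ω | ν ω = k} ∩ {ω | τ < S k ω}) := by
    ext ω
    simp only [Set.mem_setOf_eq, Set.mem_iUnion, Set.mem_inter_iff]
    constructor
    · intro hlt
      refine ⟨ν ω, rfl, ?_⟩
      show τ < ∑ i ∈ Finset.range (ν ω), T (i + 1) ω
      rw [← hTa ω]; exact hlt
    · rintro ⟨k, hk, hlt⟩
      rw [hTa ω]
      subst hk
      exact hlt
  have hmeaspiece : ∀ k, MeasurableSet ({ω | ν ω = k} ∩ {ω | τ < S k ω}) := fun k =>
    (hνmeas (measurableSet_singleton k)).inter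
      (measurableSet_lt measurable_const (hSmeas k))
  have hdisj : Pairwise (Function.onFun Disjoint
      fun k => {ω | ν ω = k} ∩ {ω | τ < S k ω}) := by
    intro i j hij
    refine Set.disjoint_left.mpr ?_
    rintro ω ⟨hi, _⟩ ⟨hj, _⟩
    exact hij (hi.symm.trans hj)
  have hterm : ∀ k : ℕ, ℙ ({ω | ν ω = k} ∩ {ω | τ < S k ω})
      ≤ ENNReal.ofReal ((1 / 2 : ℝ) ^ k * gtail b k τ) := by
    intro k
    rcases Nat.eq_zero_or_pos k with hk0 | hk1
    · subst hk0
      have hempty : {ω : Ω | τ < S 0 ω} = ∅ := by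
        ext ω; simp [hSdef]; linarith
      rw [hempty, Set.inter_empty, measure_empty]
      exact zero_le
    · have hB : MeasurableSet {f : ℕ → ℝ | τ < ∑ i ∈ Finset.range k, f (i + 1)} :=
        measurableSet_lt measurable_const
          (Finset.measurable_sum _ fun i _ => measurable_pi_apply (i + 1))
      have hsplit := hνT.measure_inter_preimage_eq_mul {k}
        {f : ℕ → ℝ | τ < ∑ i ∈ Finset.range k, f (i + 1)} (measurableSet_singleton k) hB
      have h1 : ν ⁻¹' {k} = {ω | ν ω = k} := rfl
      have h2 : (fun ω i => T i ω) ⁻¹' {f : ℕ → ℝ | τ < ∑ i ∈ Finset.range k, f (i + 1)}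
          = {ω | τ < S k ω} := rfl
      rw [h1, h2] at hsplit
      rw [hsplit]
      have hν' : ℙ {ω | ν ω = k} = ENNReal.ofReal ((1 / 2 : ℝ) ^ k) := by
        rw [← hν k hk1]
        exact (ENNReal.ofReal_toReal (measure_ne_top _ _)).symm
      have hS' : ℙ {ω | τ < S k ω} ≤ ENNReal.ofReal (gtail b k τ) := by
        rw [ENNReal.le_ofReal_iff_toReal_le (measure_ne_top _ _)
          (gtail_nonneg hb.le hτ.le k)]
        exact hStail k τ hτ
      calc ℙ {ω | ν ω = k} * ℙ {ω | τ < S k ω}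
          ≤ ENNReal.ofReal ((1 / 2 : ℝ) ^ k) * ENNReal.ofReal (gtail b k τ) := by
            rw [hν']
            exact mul_le_mul_right hS' _
        _ = ENNReal.ofReal ((1 / 2 : ℝ) ^ k * gtail b k τ) :=
            (ENNReal.ofReal_mul (by positivity)).symm
  have hle : ℙ {ω | τ < Ta ω} ≤ ENNReal.ofReal (Real.exp (-b * τ / 2)) := by
    rw [hU, measure_iUnion hdisj hmeaspiece]
    calc ∑' k : ℕ, ℙ ({ω | ν ω = k} ∩ {ω | τ < S k ω})
        ≤ ∑' k : ℕ, ENNReal.ofReal ((1 / 2 : ℝ) ^ k * gtail b k τ) :=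
          ENNReal.tsum_le_tsum hterm
      _ = ENNReal.ofReal (Real.exp (-b * τ / 2)) := geom_gtail_sum hb hτ
  calc (ℙ {ω | τ < Ta ω}).toReal
      ≤ (ENNReal.ofReal (Real.exp (-b * τ / 2))).toReal :=
        ENNReal.toReal_mono ENNReal.ofReal_ne_top hle
    _ = Real.exp (-b * τ / 2) := ENNReal.toReal_ofReal (Real.exp_pos _).le
end

section
/- Let (T̃_i)_{i≥1} be i.i.d. nonnegative random variables with P(T̃_1 > τ) ≥ e^{-bτ} for all τ > 0 and some b > 0, let ν be independent of (T̃_i) with geometric distribution P(ν = k) = 2^{-k} for k = 1, 2, ..., and let T_a = Σ_{i=1}^{ν} T̃_i. Then P(T_a > τ) ≥ e^{-bτ/2} for all τ > 0. -/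
open MeasureTheory ProbabilityTheory

noncomputable def st13Q (b : ℝ) (k : ℕ) (s : ℝ) : ℝ :=
  Real.exp (-(b * s)) * ∑ j ∈ Finset.range k, (b * s) ^ j / (Nat.factorial j)

noncomputable def st13Qd (b : ℝ) (k : ℕ) (s : ℝ) : ℝ :=
  b * (b * s) ^ (k - 1) * Real.exp (-(b * s)) / (Nat.factorial (k - 1))

lemma st13Q_zero (b : ℝ) (k : ℕ) : st13Q b (k + 1) 0 = 1 := by
  simp only [st13Q, mul_zero]
  rw [Finset.sum_eq_single 0]
  · simp
  · intro j _ hj; simp [zero_pow hj]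
  · simp

lemma st13Q_nonneg (b : ℝ) (k : ℕ) (s : ℝ) (h : 0 ≤ b * s) : 0 ≤ st13Q b k s := by
  apply mul_nonneg (Real.exp_pos _).le
  exact Finset.sum_nonneg fun j _ => div_nonneg (pow_nonneg h j) (by positivity)

lemma st13Q_one (b s : ℝ) : st13Q b 1 s = Real.exp (-(b * s)) := by
  simp [st13Q]

lemma st13Q_succ (b : ℝ) (k : ℕ) (s : ℝ) :
    st13Q b (k + 1) s = st13Q b k s + Real.exp (-(b * s)) * (b * s) ^ k / (Nat.factorial k) := by
  simp [st13Q, Finset.sum_range_succ, mul_add, mul_div_assoc]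

lemma st13_hasDerivAt (b : ℝ) (k : ℕ) (s : ℝ) :
    HasDerivAt (st13Q b (k + 1)) (-(st13Qd b (k + 1) s)) s := by
  have hlin : HasDerivAt (fun s : ℝ => b * s) b s := by
    simpa using (hasDerivAt_id s).const_mul b
  have hexp : HasDerivAt (fun s : ℝ => Real.exp (-(b * s))) (-b * Real.exp (-(b * s))) s := by
    simpa [mul_comm] using (hlin.neg).exp
  have hsum : HasDerivAt (fun s : ℝ => ∑ j ∈ Finset.range (k + 1), (b * s) ^ j / (Nat.factorial j))
      (b * ∑ j ∈ Finset.range k, (b * s) ^ j / (Nat.factorial j)) s := by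
    have h1 : HasDerivAt (fun s : ℝ => ∑ j ∈ Finset.range (k + 1), (b * s) ^ j / (Nat.factorial j))
        (∑ j ∈ Finset.range (k + 1), (j : ℝ) * (b * s) ^ (j - 1) * b / (Nat.factorial j)) s := by
      apply HasDerivAt.fun_sum
      intro j _
      exact (hlin.pow j).div_const _
    have h2 : (∑ j ∈ Finset.range (k + 1), (j : ℝ) * (b * s) ^ (j - 1) * b / (Nat.factorial j))
        = b * ∑ j ∈ Finset.range k, (b * s) ^ j / (Nat.factorial j) := by
      rw [Finset.sum_range_succ']
      have h0 : ((0:ℕ) : ℝ) * (b * s) ^ (0 - 1) * b / (Nat.factorial 0) = 0 := by simp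
      rw [h0, add_zero, Finset.mul_sum]
      apply Finset.sum_congr rfl
      intro j _
      simp only [Nat.add_sub_cancel, Nat.factorial_succ, Nat.cast_mul, Nat.cast_add, Nat.cast_one]
      have hj : ((j:ℝ) + 1) ≠ 0 := by positivity
      have hf : ((Nat.factorial j : ℝ)) ≠ 0 := by positivity
      field_simp
    rw [h2] at h1; exact h1
  have := hexp.fun_mul hsum
  refine this.congr_deriv (Eq.symm ?_)
  rw [st13Qd]
  simp only [Nat.add_sub_cancel, Finset.sum_range_succ]
  have hf : ((Nat.factorial k : ℝ)) ≠ 0 := by positivity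
  field_simp
  ring

lemma st13_hasDerivAt_comp (b : ℝ) (k : ℕ) (τ u : ℝ) :
    HasDerivAt (fun u => st13Q b (k + 1) (τ - u)) (st13Qd b (k + 1) (τ - u)) u := by
  have h1 : HasDerivAt (fun u : ℝ => τ - u) (-1) u := (hasDerivAt_id u).const_sub τ
  have := (st13_hasDerivAt b k (τ - u)).comp u h1
  simpa [Function.comp_def] using this

lemma st13_cont_Qd (b : ℝ) (k : ℕ) (τ : ℝ) :
    Continuous fun u => st13Qd b (k + 1) (τ - u) := by
  unfold st13Qd
  fun_prop

lemma st13_integral (b : ℝ) (k : ℕ) (τ a c : ℝ) :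
    ∫ u in a..c, st13Qd b (k + 1) (τ - u) = st13Q b (k + 1) (τ - c) - st13Q b (k + 1) (τ - a) := by
  exact intervalIntegral.integral_eq_sub_of_hasDerivAt
    (fun u _ => st13_hasDerivAt_comp b k τ u)
    ((st13_cont_Qd b k τ).intervalIntegrable a c)

lemma st13_int_pow (m : ℕ) (τ : ℝ) :
    ∫ u in (0:ℝ)..τ, (τ - u) ^ m = τ ^ (m + 1) / (m + 1) := by
  have hD : ∀ u ∈ Set.uIcc (0:ℝ) τ,
      HasDerivAt (fun u : ℝ => -((τ - u) ^ (m + 1)) / (m + 1)) ((τ - u) ^ m) u := by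
    intro u _
    have h1 : HasDerivAt (fun u : ℝ => τ - u) (-1) u := (hasDerivAt_id u).const_sub τ
    have := ((h1.pow (m + 1)).neg).div_const ((m : ℝ) + 1)
    refine this.congr_deriv ?_
    have : ((m : ℝ) + 1) ≠ 0 := by positivity
    rw [div_eq_iff this]
    push_cast
    ring
  rw [intervalIntegral.integral_eq_sub_of_hasDerivAt hD
    (Continuous.intervalIntegrable (by fun_prop) _ _)]
  simp only [sub_self, sub_zero, zero_pow (Nat.succ_ne_zero m), neg_zero, zero_div]
  ring

lemma st13_integral_exp (b : ℝ) (hb : 0 < b) (k : ℕ) (τ : ℝ) :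
    ∫ u in (0:ℝ)..τ, st13Qd b (k + 1) (τ - u) * Real.exp (-(b * u))
      = Real.exp (-(b * τ)) * (b * τ) ^ (k + 1) / (Nat.factorial (k + 1)) := by
  have h1 : ∀ u : ℝ, st13Qd b (k + 1) (τ - u) * Real.exp (-(b * u))
      = (Real.exp (-(b * τ)) * b ^ (k + 1) / (Nat.factorial k)) * (τ - u) ^ k := by
    intro u
    unfold st13Qd
    simp only [Nat.add_sub_cancel]
    have he : Real.exp (-(b * (τ - u))) * Real.exp (-(b * u)) = Real.exp (-(b * τ)) := by
      rw [← Real.exp_add]; ring_nf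
    have step : b * (b * (τ - u)) ^ k * Real.exp (-(b * (τ - u))) / (Nat.factorial k)
          * Real.exp (-(b * u))
        = (b * (b * (τ - u)) ^ k / (Nat.factorial k))
          * (Real.exp (-(b * (τ - u))) * Real.exp (-(b * u))) := by ring
    rw [step, he, mul_pow]
    have hf : ((Nat.factorial k : ℝ)) ≠ 0 := by positivity
    field_simp
    ring
  simp only [h1]
  rw [intervalIntegral.integral_const_mul, st13_int_pow]
  have hf : ((Nat.factorial k : ℝ)) ≠ 0 := by positivity
  have hm : ((k : ℝ) + 1) ≠ 0 := by positivity
  rw [Nat.factorial_succ, mul_pow]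
  push_cast
  field_simp

open scoped ENNReal

lemma st13_step (b τ : ℝ) (hb : 0 < b) (hτ : 0 < τ) (k : ℕ)
    (μX μS : Measure ℝ) [IsProbabilityMeasure μX] [IsProbabilityMeasure μS]
    (hX : ∀ u : ℝ, 0 < u → ENNReal.ofReal (Real.exp (-(b * u))) ≤ μX (Set.Ioi u))
    (hX0 : μX (Set.Iio 0) = 0)
    (hS : ∀ s : ℝ, ENNReal.ofReal (st13Q b (k + 1) (max s 0)) ≤ μS (Set.Ioi s)) :
    ENNReal.ofReal (st13Q b (k + 2) τ) ≤ ∫⁻ x, μS (Set.Ioi (τ - x)) ∂μX := by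
  classical
  set g : ℝ → ℝ≥0∞ := fun u => ENNReal.ofReal (st13Qd b (k + 1) (τ - u)) with hg
  have contQd : Continuous fun u => st13Qd b (k + 1) (τ - u) := st13_cont_Qd b k τ
  have gmeas : Measurable g := (ENNReal.measurable_ofReal.comp contQd.measurable)
  have hQdnn : ∀ u : ℝ, u ≤ τ → 0 ≤ st13Qd b (k + 1) (τ - u) := by
    intro u hu
    unfold st13Qd
    simp only [Nat.add_sub_cancel]
    have : 0 ≤ b * (τ - u) := mul_nonneg hb.le (by linarith)
    positivity
  have hQτ : 0 ≤ st13Q b (k + 1) τ := st13Q_nonneg _ _ _ (by positivity)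
  -- Part A : pointwise bound for x ≥ 0
  have partA : ∀ x : ℝ, 0 ≤ x →
      ENNReal.ofReal (st13Q b (k + 1) τ) + ∫⁻ u in Set.Ioo 0 τ, (Set.Iio x).indicator g u
        ≤ μS (Set.Ioi (τ - x)) := by
    intro x hx
    have hmin : (0:ℝ) ≤ min x τ := le_min hx hτ.le
    have hR : ∫ u in (0:ℝ)..(min x τ), st13Qd b (k + 1) (τ - u)
        = st13Q b (k + 1) (τ - min x τ) - st13Q b (k + 1) τ := by
      rw [st13_integral]; simp
    have hRnn : 0 ≤ st13Q b (k + 1) (τ - min x τ) - st13Q b (k + 1) τ := by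
      rw [← hR]
      apply intervalIntegral.integral_nonneg hmin
      intro u hu
      exact hQdnn u (le_trans hu.2 (min_le_right _ _))
    have hmax : max (τ - x) 0 = τ - min x τ := by
      rcases le_total x τ with h | h
      · rw [min_eq_left h, max_eq_left (by linarith)]
      · rw [min_eq_right h, max_eq_right (by linarith), sub_self]
    -- compute the lintegral of the indicator
    have hI : ∫⁻ u in Set.Ioo 0 τ, (Set.Iio x).indicator g u
        = ENNReal.ofReal (st13Q b (k + 1) (τ - min x τ) - st13Q b (k + 1) τ) := by
      rw [lintegral_indicator measurableSet_Iio,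
        Measure.restrict_restrict measurableSet_Iio]
      have hset : Set.Iio x ∩ Set.Ioo 0 τ = Set.Ioo 0 (min x τ) := by
        ext u
        simp only [Set.mem_inter_iff, Set.mem_Iio, Set.mem_Ioo, lt_min_iff]
        tauto
      rw [hset]
      have hinteg : IntegrableOn (fun u => st13Qd b (k + 1) (τ - u)) (Set.Ioo 0 (min x τ)) := by
        exact (contQd.integrableOn_Icc).mono_set Set.Ioo_subset_Icc_self
      rw [← ofReal_integral_eq_lintegral_ofReal hinteg]
      · rw [← hR]
        congr 1
        rw [intervalIntegral.integral_of_le hmin, ← integral_Ioc_eq_integral_Ioo]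
      · filter_upwards [ae_restrict_mem measurableSet_Ioo] with u hu
        exact hQdnn u (le_trans hu.2.le (min_le_right _ _))
    rw [hI, ← ENNReal.ofReal_add hQτ hRnn]
    have : st13Q b (k + 1) τ + (st13Q b (k + 1) (τ - min x τ) - st13Q b (k + 1) τ)
        = st13Q b (k + 1) (max (τ - x) 0) := by rw [hmax]; ring
    rw [this]
    exact hS (τ - x)
  -- Part B : Tonelli
  have hXIci : μX (Set.Ici 0) = 1 := by
    have := measure_add_measure_compl (μ := μX) (measurableSet_Iio (a := (0:ℝ)))
    rw [hX0, zero_add, Set.compl_Iio] at this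
    simpa using this
  set c : ℝ≥0∞ := ENNReal.ofReal (st13Q b (k + 1) τ) with hc
  have hFmeas : Measurable (Function.uncurry fun (x u : ℝ) => (Set.Iio x).indicator g u) := by
    have : (Function.uncurry fun (x u : ℝ) => (Set.Iio x).indicator g u)
        = Set.indicator {p : ℝ × ℝ | p.2 < p.1} (fun p => g p.2) := by
      ext ⟨x, u⟩
      simp [Function.uncurry, Set.indicator_apply, Set.mem_Iio]
    rw [this]
    exact Measurable.indicator (gmeas.comp measurable_snd)
      (measurableSet_lt measurable_snd measurable_fst)
  calc ENNReal.ofReal (st13Q b (k + 2) τ)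
      = c + ENNReal.ofReal (Real.exp (-(b * τ)) * (b * τ) ^ (k + 1) / (Nat.factorial (k + 1))) := by
        rw [hc, ← ENNReal.ofReal_add hQτ (by positivity)]
        congr 1
        rw [st13Q_succ]
    _ ≤ c + ∫⁻ u in Set.Ioo 0 τ, g u * μX (Set.Ioi u) := by
        apply add_le_add_right
        have heq : ENNReal.ofReal (Real.exp (-(b * τ)) * (b * τ) ^ (k + 1) / (Nat.factorial (k + 1)))
            = ∫⁻ u in Set.Ioo 0 τ, ENNReal.ofReal
                (st13Qd b (k + 1) (τ - u) * Real.exp (-(b * u))) := by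
          rw [← st13_integral_exp b hb k τ]
          have hinteg : IntegrableOn
              (fun u => st13Qd b (k + 1) (τ - u) * Real.exp (-(b * u))) (Set.Ioo 0 τ) := by
            exact ((contQd.mul (by fun_prop)).integrableOn_Icc).mono_set Set.Ioo_subset_Icc_self
          rw [← ofReal_integral_eq_lintegral_ofReal hinteg]
          · congr 1
            rw [intervalIntegral.integral_of_le hτ.le, ← integral_Ioc_eq_integral_Ioo]
          · filter_upwards [ae_restrict_mem measurableSet_Ioo] with u hu
            exact mul_nonneg (hQdnn u hu.2.le) (Real.exp_pos _).le
        rw [heq]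
        apply setLIntegral_mono' measurableSet_Ioo
        intro u hu
        rw [ENNReal.ofReal_mul (hQdnn u hu.2.le)]
        exact mul_le_mul_right (hX u hu.1) _
    _ ≤ c + ∫⁻ u in Set.Ioo 0 τ, ∫⁻ x in Set.Ici 0, (Set.Iio x).indicator g u ∂μX := by
        apply add_le_add_right
        apply setLIntegral_mono' measurableSet_Ioo
        intro u hu
        have hind : ∀ x : ℝ, (Set.Iio x).indicator g u = (Set.Ioi u).indicator (fun _ => g u) x := by
          intro x
          simp only [Set.indicator_apply, Set.mem_Iio, Set.mem_Ioi]
        have : ∫⁻ x in Set.Ici 0, (Set.Iio x).indicator g u ∂μX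
            = g u * μX (Set.Ioi u) := by
          simp only [hind]
          rw [lintegral_indicator measurableSet_Ioi, Measure.restrict_restrict measurableSet_Ioi,
            setLIntegral_const]
          congr 1
          rw [Set.inter_eq_left.mpr]
          intro y hy
          exact le_of_lt (lt_trans hu.1 hy)
        rw [this]
    _ = ∫⁻ x in Set.Ici 0, (c + ∫⁻ u in Set.Ioo 0 τ, (Set.Iio x).indicator g u) ∂μX := by
        rw [lintegral_add_left measurable_const, setLIntegral_const, hXIci, mul_one]
        congr 1
        rw [lintegral_lintegral_swap]
        exact (hFmeas.comp measurable_swap).aemeasurable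
    _ ≤ ∫⁻ x in Set.Ici 0, μS (Set.Ioi (τ - x)) ∂μX := by
        apply setLIntegral_mono' measurableSet_Ici
        intro x hx
        exact partA x hx
    _ ≤ ∫⁻ x, μS (Set.Ioi (τ - x)) ∂μX := lintegral_mono' Measure.restrict_le_self le_rfl

lemma st13_closed (b τ : ℝ) (K : ℕ) :
    ∑ k ∈ Finset.range K, (1/2:ℝ)^(k+1) * st13Q b (k+1) τ
      = Real.exp (-(b*τ)) * ((∑ j ∈ Finset.range K, (b*τ/2)^j / (Nat.factorial j))
          - (∑ j ∈ Finset.range K, (b*τ)^j / (Nat.factorial j)) / 2^K) := by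
  induction K with
  | zero => simp
  | succ K ih =>
    rw [Finset.sum_range_succ, ih]
    have hQ : st13Q b (K+1) τ
        = Real.exp (-(b*τ)) * ∑ j ∈ Finset.range (K+1), (b*τ)^j / (Nat.factorial j) := rfl
    rw [hQ]
    rw [Finset.sum_range_succ (f := fun j => (b*τ/2)^j / (Nat.factorial j : ℝ)),
      Finset.sum_range_succ (f := fun j => (b*τ)^j / (Nat.factorial j : ℝ))]
    have h2K : ((2:ℝ))^K ≠ 0 := by positivity
    have hfK : ((Nat.factorial K : ℝ)) ≠ 0 := by positivity
    rw [div_pow, pow_succ, pow_succ]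
    field_simp
    have h12 : (1/2:ℝ)^K * 2^K = 1 := by rw [← mul_pow]; norm_num
    linear_combination (-2*b^K*τ^K) * h12

lemma st13_tendsto (b τ : ℝ) (hb : 0 < b) (hτ : 0 < τ) :
    Filter.Tendsto (fun K => ∑ k ∈ Finset.range K, (1/2:ℝ)^(k+1) * st13Q b (k+1) τ)
      Filter.atTop (nhds (Real.exp (-(b*τ)/2))) := by
  have hx : 0 ≤ b * τ := by positivity
  have t1 : Filter.Tendsto (fun K => ∑ j ∈ Finset.range K, (b*τ/2)^j / (Nat.factorial j : ℝ))
      Filter.atTop (nhds (Real.exp (b*τ/2))) := by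
    have := (NormedSpace.expSeries_div_hasSum_exp (b*τ/2 : ℝ)).tendsto_sum_nat
    rwa [← Real.exp_eq_exp_ℝ] at this
  have t2 : Filter.Tendsto
      (fun K => (∑ j ∈ Finset.range K, (b*τ)^j / (Nat.factorial j : ℝ)) / 2^K)
      Filter.atTop (nhds 0) := by
    apply squeeze_zero
    · intro K
      apply div_nonneg _ (by positivity)
      exact Finset.sum_nonneg fun j _ => div_nonneg (pow_nonneg hx j) (by positivity)
    · intro K
      show _ ≤ Real.exp (b*τ) * (1/2:ℝ)^K
      have h1 : (∑ j ∈ Finset.range K, (b*τ)^j / (Nat.factorial j : ℝ)) ≤ Real.exp (b*τ) :=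
        Real.sum_le_exp_of_nonneg hx K
      have h2 : ((1:ℝ)/2)^K = 1/2^K := by rw [div_pow, one_pow]
      rw [h2, mul_one_div]
      exact by gcongr
    · have := tendsto_pow_atTop_nhds_zero_of_lt_one (by norm_num : (0:ℝ) ≤ 1/2) (by norm_num)
      simpa using this.const_mul (Real.exp (b*τ))
  have := ((t1.sub t2).const_mul (Real.exp (-(b*τ))))
  simp only [st13_closed]
  convert this using 2
  rw [sub_zero, ← Real.exp_add]
  congr 1
  ring

lemma st13_tsum (b τ : ℝ) (hb : 0 < b) (hτ : 0 < τ) :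
    ENNReal.ofReal (Real.exp (-(b * τ) / 2))
      ≤ ∑' k : ℕ, ENNReal.ofReal ((1/2:ℝ)^(k+1)) * ENNReal.ofReal (st13Q b (k+1) τ) := by
  have hQnn : ∀ k : ℕ, 0 ≤ st13Q b (k+1) τ := fun k => st13Q_nonneg _ _ _ (by positivity)
  have hofp : ∀ K : ℕ,
      ENNReal.ofReal (∑ k ∈ Finset.range K, (1/2:ℝ)^(k+1) * st13Q b (k+1) τ)
        ≤ ∑' k : ℕ, ENNReal.ofReal ((1/2:ℝ)^(k+1)) * ENNReal.ofReal (st13Q b (k+1) τ) := by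
    intro K
    rw [ENNReal.ofReal_sum_of_nonneg (fun k _ => mul_nonneg (by positivity) (hQnn k))]
    have : ∀ k ∈ Finset.range K, ENNReal.ofReal ((1/2:ℝ)^(k+1) * st13Q b (k+1) τ)
        = ENNReal.ofReal ((1/2:ℝ)^(k+1)) * ENNReal.ofReal (st13Q b (k+1) τ) :=
      fun k _ => ENNReal.ofReal_mul (by positivity)
    rw [Finset.sum_congr rfl this]
    exact ENNReal.sum_le_tsum _
  have htends : Filter.Tendsto
      (fun K => ENNReal.ofReal (∑ k ∈ Finset.range K, (1/2:ℝ)^(k+1) * st13Q b (k+1) τ))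
      Filter.atTop (nhds (ENNReal.ofReal (Real.exp (-(b*τ)/2)))) :=
    (ENNReal.continuous_ofReal.tendsto _).comp (st13_tendsto b τ hb hτ)
  exact le_of_tendsto htends (Filter.Eventually.of_forall hofp)

/-- If `T̃_i` are i.i.d. nonnegative with `P(T̃_1 > τ) ≥ e^{-bτ}` for all
`τ > 0` (`b > 0`), and `ν` is an independent geometric variable with `P(ν = k) = 2^{-k}`,
then the geometric compound `T_a = Σ_{i=1}^{ν} T̃_i` satisfies `P(T_a > τ) ≥ e^{-bτ/2}`
for all `τ > 0`. -/
theorem stmt_13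
    {Ω : Type*} [MeasureSpace Ω] [IsProbabilityMeasure (ℙ : Measure Ω)]
    (T : ℕ → Ω → ℝ) (ν : Ω → ℕ) (Ta : Ω → ℝ) (b : ℝ) (hb : 0 < b)
    (hmeas : ∀ i, Measurable (T i)) (hνmeas : Measurable ν)
    (hindep : iIndepFun T ℙ)
    (hident : ∀ i j, IdentDistrib (T i) (T j) ℙ ℙ)
    (hnonneg : ∀ i ω, 0 ≤ T i ω)
    (hνT : IndepFun ν (fun ω i => T i ω) ℙ)
    (hν : ∀ k : ℕ, 1 ≤ k → (ℙ {ω | ν ω = k}).toReal = (1 / 2 : ℝ) ^ k)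
    (hTa : ∀ ω, Ta ω = ∑ i ∈ Finset.range (ν ω), T (i + 1) ω)
    (htail : ∀ τ > 0, (ℙ {ω | τ < T 1 ω}).toReal ≥ Real.exp (-b * τ)) :
    ∀ τ > 0, (ℙ {ω | τ < Ta ω}).toReal ≥ Real.exp (-b * τ / 2) := by
  intro τ hτ
  set S : ℕ → Ω → ℝ := fun m ω => ∑ i ∈ Finset.range m, T (i + 1) ω with hSdef
  have Smeas : ∀ m, Measurable (S m) := fun m =>
    Finset.measurable_sum _ (fun i _ => hmeas (i + 1))
  have htail' : ∀ (i : ℕ) (u : ℝ), 0 < u →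
      ENNReal.ofReal (Real.exp (-(b * u))) ≤ ℙ {ω | u < T i ω} := by
    intro i u hu
    have hident' := (hident 1 i).measure_mem_eq (measurableSet_Ioi (a := u))
    have hset1 : T 1 ⁻¹' Set.Ioi u = {ω | u < T 1 ω} := rfl
    have hset2 : T i ⁻¹' Set.Ioi u = {ω | u < T i ω} := rfl
    rw [hset1, hset2] at hident'
    rw [← hident']
    have h2 := htail u hu
    rw [neg_mul] at h2
    exact ENNReal.ofReal_le_of_le_toReal h2
  have hT1 : ℙ {ω | 0 < T 1 ω} = 1 := by
    have hmono : Monotone fun n : ℕ => {ω | (1:ℝ)/(n+1) < T 1 ω} := by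
      intro n m hnm ω hω
      simp only [Set.mem_setOf_eq] at *
      refine lt_of_le_of_lt ?_ hω
      have h1 : ((n:ℝ)+1) ≤ ((m:ℝ)+1) := by exact_mod_cast Nat.succ_le_succ hnm
      gcongr
    have hunion : ⋃ n : ℕ, {ω | (1:ℝ)/(n+1) < T 1 ω} = {ω | 0 < T 1 ω} := by
      ext ω
      simp only [Set.mem_iUnion, Set.mem_setOf_eq]
      constructor
      · rintro ⟨n, hn⟩
        exact lt_trans (by positivity) hn
      · intro h
        obtain ⟨n, hn⟩ := exists_nat_one_div_lt h
        exact ⟨n, hn⟩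
    rw [← hunion, hmono.directed_le.measure_iUnion]
    refine le_antisymm (iSup_le fun n => prob_le_one) ?_
    have ht : Filter.Tendsto (fun n : ℕ => ENNReal.ofReal (Real.exp (-(b * (1/((n:ℝ)+1))))))
        Filter.atTop (nhds 1) := by
      have h0 : Filter.Tendsto (fun n : ℕ => (1:ℝ)/((n:ℝ)+1)) Filter.atTop (nhds 0) :=
        tendsto_one_div_add_atTop_nhds_zero_nat
      have h1 : Filter.Tendsto (fun n : ℕ => -(b * ((1:ℝ)/((n:ℝ)+1)))) Filter.atTop (nhds 0) := by
        have := (h0.const_mul b).neg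
        simpa using this
      have h2 := (Real.continuous_exp.tendsto 0).comp h1
      have h3 := (ENNReal.continuous_ofReal.tendsto _).comp h2
      simpa [Function.comp_def] using h3
    refine le_of_tendsto ht (Filter.Eventually.of_forall fun n => ?_)
    exact le_trans (htail' 1 _ (by positivity))
      (le_iSup (fun n : ℕ => ℙ {ω | (1:ℝ)/((n:ℝ)+1) < T 1 ω}) n)
  have hSpos : ∀ (m : ℕ) (s : ℝ), s ≤ 0 → 1 ≤ ℙ {ω | s < S (m+1) ω} := by
    intro m s hs
    rw [← hT1]
    apply measure_mono
    intro ω hω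
    simp only [Set.mem_setOf_eq] at *
    have h1 : T 1 ω ≤ S (m+1) ω := by
      have := Finset.single_le_sum (f := fun i => T (i+1) ω)
        (fun i _ => hnonneg (i+1) ω) (Finset.mem_range.mpr (Nat.succ_pos m))
      simpa [hSdef] using this
    linarith
  have hSbound : ∀ (m : ℕ) (s : ℝ),
      ENNReal.ofReal (st13Q b (m+1) (max s 0)) ≤ ℙ {ω | s < S (m+1) ω} := by
    intro m
    induction m with
    | zero =>
      intro s
      rcases le_or_gt s 0 with hs | hs
      · rw [max_eq_right hs, st13Q_zero, ENNReal.ofReal_one]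
        exact hSpos 0 s hs
      · rw [max_eq_left hs.le, st13Q_one]
        have hset : {ω | s < S 1 ω} = {ω | s < T 1 ω} := by
          ext ω
          simp [hSdef]
        rw [hset]
        exact htail' 1 s hs
    | succ m ih =>
      intro s
      rcases le_or_gt s 0 with hs | hs
      · rw [max_eq_right hs, st13Q_zero, ENNReal.ofReal_one]
        exact hSpos (m+1) s hs
      · rw [max_eq_left hs.le]
        set μX := Measure.map (T (m+2)) ℙ with hμX
        set μS := Measure.map (S (m+1)) ℙ with hμS
        haveI : IsProbabilityMeasure μX := Measure.isProbabilityMeasure_map (hmeas (m+2)).aemeasurable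
        haveI : IsProbabilityMeasure μS := Measure.isProbabilityMeasure_map (Smeas (m+1)).aemeasurable
        have hXtail : ∀ u : ℝ, 0 < u → ENNReal.ofReal (Real.exp (-(b * u))) ≤ μX (Set.Ioi u) := by
          intro u hu
          rw [hμX, Measure.map_apply (hmeas (m+2)) measurableSet_Ioi]
          exact htail' (m+2) u hu
        have hX0 : μX (Set.Iio 0) = 0 := by
          rw [hμX, Measure.map_apply (hmeas (m+2)) measurableSet_Iio]
          have hempty : T (m+2) ⁻¹' Set.Iio 0 = ∅ := by
            ext ω
            simp only [Set.mem_preimage, Set.mem_Iio, Set.mem_empty_iff_false, iff_false, not_lt]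
            exact hnonneg _ ω
          rw [hempty, measure_empty]
        have hStail : ∀ r : ℝ, ENNReal.ofReal (st13Q b (m+1) (max r 0)) ≤ μS (Set.Ioi r) := by
          intro r
          rw [hμS, Measure.map_apply (Smeas (m+1)) measurableSet_Ioi]
          exact ih r
        have hind : IndepFun (T (m+2)) (S (m+1)) ℙ := by
          have hfun : S (m+1) = ∑ j ∈ Finset.image Nat.succ (Finset.range (m+1)), T j := by
            funext ω
            rw [Finset.sum_apply, Finset.sum_image (fun i _ j _ h => Nat.succ_injective h)]
          have hnot : (m+2) ∉ Finset.image Nat.succ (Finset.range (m+1)) := by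
            simp only [Finset.mem_image, Finset.mem_range]
            rintro ⟨i, hi, h⟩
            omega
          have h := hindep.indepFun_finsetSum_of_notMem hmeas hnot
          rw [← hfun] at h
          exact h.symm
        have hprod := (indepFun_iff_map_prod_eq_prod_map_map
          (hmeas (m+2)).aemeasurable (Smeas (m+1)).aemeasurable).mp hind
        have hEmeas : MeasurableSet {p : ℝ × ℝ | s - p.1 < p.2} :=
          measurableSet_lt (measurable_const.sub measurable_fst) measurable_snd
        have hset : {ω | s < S (m+2) ω}
            = (fun ω => (T (m+2) ω, S (m+1) ω)) ⁻¹' {p : ℝ × ℝ | s - p.1 < p.2} := by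
          ext ω
          simp only [Set.mem_setOf_eq, Set.mem_preimage, hSdef, Finset.sum_range_succ]
          constructor <;> intro h <;> linarith
        have hkey : ℙ {ω | s < S (m+2) ω} = ∫⁻ x, μS (Set.Ioi (s - x)) ∂μX := by
          rw [hset, ← Measure.map_apply ((hmeas (m+2)).prodMk (Smeas (m+1))) hEmeas, hprod,
            Measure.prod_apply hEmeas]
          rfl
        rw [hkey]
        exact st13_step b s hb hs m μX μS hXtail hX0 hStail
  have hA : ∀ k : ℕ, MeasurableSet ({ω | ν ω = k+1} ∩ {ω | τ < S (k+1) ω}) := fun k =>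
    (hνmeas (measurableSet_singleton (k+1))).inter
      (measurableSet_lt measurable_const (Smeas (k+1)))
  have hdisj : Pairwise (Function.onFun Disjoint fun k : ℕ =>
      {ω | ν ω = k+1} ∩ {ω | τ < S (k+1) ω}) := by
    intro i j hij
    simp only [Function.onFun]
    apply Set.disjoint_left.mpr
    rintro ω ⟨h1, _⟩ ⟨h2, _⟩
    simp only [Set.mem_setOf_eq] at h1 h2
    exact hij (by omega)
  have hsub : (⋃ k : ℕ, {ω | ν ω = k+1} ∩ {ω | τ < S (k+1) ω}) ⊆ {ω | τ < Ta ω} := by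
    rintro ω hω
    simp only [Set.mem_iUnion, Set.mem_inter_iff, Set.mem_setOf_eq] at hω
    obtain ⟨k, hk1, hk2⟩ := hω
    simp only [Set.mem_setOf_eq]
    rw [hTa ω, hk1]
    exact hk2
  have hν' : ∀ k : ℕ, ℙ {ω | ν ω = k+1} = ENNReal.ofReal ((1/2:ℝ)^(k+1)) := by
    intro k
    rw [← hν (k+1) (Nat.le_add_left 1 k), ENNReal.ofReal_toReal (measure_ne_top _ _)]
  have hindν : ∀ k : ℕ, ℙ ({ω | ν ω = k+1} ∩ {ω | τ < S (k+1) ω})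
      = ℙ {ω | ν ω = k+1} * ℙ {ω | τ < S (k+1) ω} := by
    intro k
    have hψ : Measurable fun f : ℕ → ℝ => ∑ i ∈ Finset.range (k+1), f (i+1) :=
      Finset.measurable_sum _ fun i _ => measurable_pi_apply _
    have h := (hνT.comp measurable_id hψ).measure_inter_preimage_eq_mul
      (s := {k+1}) (t := Set.Ioi τ) (measurableSet_singleton _) measurableSet_Ioi
    have e1 : (id ∘ ν) ⁻¹' {k+1} = {ω | ν ω = k+1} := rfl
    have e2 : ((fun f : ℕ → ℝ => ∑ i ∈ Finset.range (k+1), f (i+1)) ∘ (fun ω i => T i ω))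
        ⁻¹' Set.Ioi τ = {ω | τ < S (k+1) ω} := rfl
    rw [e1, e2] at h
    exact h
  have hchain : ENNReal.ofReal (Real.exp (-(b*τ)/2)) ≤ ℙ {ω | τ < Ta ω} := by
    calc ENNReal.ofReal (Real.exp (-(b*τ)/2))
        ≤ ∑' k : ℕ, ENNReal.ofReal ((1/2:ℝ)^(k+1)) * ENNReal.ofReal (st13Q b (k+1) τ) :=
          st13_tsum b τ hb hτ
      _ ≤ ∑' k : ℕ, ℙ ({ω | ν ω = k+1} ∩ {ω | τ < S (k+1) ω}) := by
          apply ENNReal.tsum_le_tsum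
          intro k
          rw [hindν k, hν' k]
          apply mul_le_mul_right
          have h := hSbound k τ
          rwa [max_eq_left hτ.le] at h
      _ = ℙ (⋃ k : ℕ, {ω | ν ω = k+1} ∩ {ω | τ < S (k+1) ω}) := (measure_iUnion hdisj hA).symm
      _ ≤ ℙ {ω | τ < Ta ω} := measure_mono hsub
  rw [ge_iff_le]
  have h2 : -b * τ / 2 = -(b*τ)/2 := by ring
  rw [h2]
  exact (ENNReal.ofReal_le_iff_le_toReal (measure_ne_top _ _)).mp hchain
end
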